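/- arXiv:2602.16207 — 11 statements merged into one kernel-verified Lean document; each statement's English description precedes it below -/
import Mathlib

section
/- Let c = (c_1, …, c_n) ∈ 𝔽_q^n. Then c belongs to the multi-twisted Goppa code Γ(L, g, 𝕥, 𝕙, η) if and only if the following t linear equations over 𝔽_{q^m} hold: for every l ∈ {0, 1, …, t−1} with l ∉ {h_1, …, h_ℓ}, Σ_{i=1}^n c_i α_i^l g(α_i)^{−1} = 0, and for every j ∈ {1, …, ℓ}, Σ_{i=1}^n c_i (α_i^{h_j} + η_j α_i^{t−1+t_j}) g(α_i)^{−1} = 0. -/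
open Polynomial

attribute [local instance] Classical.propDecidable

/-- The multi-twisted Goppa code `Γ(L, g, 𝕥, 𝕙, η)`: the set of vectors
`c ∈ 𝔽_q^n` (entries in the subfield `K`) such that
`Σ_i c_i ((z - α_i)⁻¹ - Σ_j (η_j α_i^(t-1+t_j) / g(α_i)) · g⟨h_j⟩(z)) = 0`
in the quotient ring `F[z]/⟨g⟩`, where `g⟨h⟩ = g /ₘ X^(h+1)` is the polynomial
quotient of `g` by `z^(h+1)` and the inverse of `z - α_i` is taken in the
quotient ring (via `Ring.inverse`). Here `ℓ = L + 1 ≥ 1` twists. -/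
lemma coeff_div_X_pow {F : Type*} [Field F] (g : F[X]) (k n : ℕ) :
    (g /ₘ X ^ k).coeff n = g.coeff (n + k) := by
  conv_rhs => rw [← modByMonic_add_div g (X ^ k)]
  rw [coeff_add, coeff_X_pow_mul, right_eq_add]
  apply coeff_eq_zero_of_degree_lt
  exact (degree_modByMonic_lt g (monic_X_pow k)).trans_le
    (by rw [degree_X_pow]; exact_mod_cast Nat.le_add_left k n)

lemma tri_system {F : Type*} [Field F] (t : ℕ) (G : ℕ → F) (hGt : G t ≠ 0)
    (hG0 : ∀ k, t < k → G k = 0) (v : ℕ → F)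
    (h : ∀ l < t, ∑ m ∈ Finset.range t, G (m + l + 1) * v m = 0) :
    ∀ m < t, v m = 0 := by
  intro m
  induction m using Nat.strong_induction_on with
  | _ m ih =>
    intro hm
    have hl := h (t - 1 - m) (by omega)
    have hsplit : ∑ m' ∈ Finset.range t, G (m' + (t - 1 - m) + 1) * v m' =
        G t * v m := by
      rw [Finset.sum_eq_single m]
      · congr 2; omega
      · intro b hb hbm
        rcases lt_or_gt_of_ne hbm with hlt | hgt
        · rw [ih b hlt (by omega), mul_zero]
        · rw [hG0 _ (by omega), zero_mul]
      · intro hmem; exact absurd (Finset.mem_range.mpr hm) hmem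
    rw [hsplit] at hl
    exact (mul_eq_zero.mp hl).resolve_left hGt

lemma inv_X_sub_C {F : Type*} [Field F] (g : F[X]) (a : F) (ha : g.eval a ≠ 0) :
    Ring.inverse ((Ideal.Quotient.mk (Ideal.span {g})) (X - C a)) =
      (Ideal.Quotient.mk (Ideal.span {g})) (C (-(g.eval a)⁻¹) * (g /ₘ (X - C a))) := by
  set Q := Ideal.Quotient.mk (Ideal.span {g}) with hQ
  have hmul : (X - C a) * (g /ₘ (X - C a)) = g - C (g.eval a) := by
    have h := modByMonic_add_div g (X - C a)
    rw [modByMonic_X_sub_C_eq_C_eval] at h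
    linear_combination h
  have hgq : Q g = 0 := by
    rw [hQ, Ideal.Quotient.eq_zero_iff_mem]
    exact Ideal.subset_span rfl
  have h1 : Q (X - C a) * Q (C (-(g.eval a)⁻¹) * (g /ₘ (X - C a))) = 1 := by
    rw [← map_mul, ← mul_assoc, mul_comm (X - C a) (C (-(g.eval a)⁻¹)), mul_assoc, hmul]
    have : C (-(g.eval a)⁻¹) * (g - C (g.eval a)) =
        C (-(g.eval a)⁻¹) * g + C ((g.eval a)⁻¹ * g.eval a) := by
      rw [C_mul, map_neg]; ring
    rw [this, inv_mul_cancel₀ ha, map_add, map_mul, hgq, mul_zero, zero_add]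
    simp
  have hu : IsUnit (Q (X - C a)) := IsUnit.of_mul_eq_one _ h1
  calc Ring.inverse (Q (X - C a))
      = Ring.inverse (Q (X - C a)) * (Q (X - C a) * Q (C (-(g.eval a)⁻¹) * (g /ₘ (X - C a)))) := by
        rw [h1, mul_one]
    _ = (Ring.inverse (Q (X - C a)) * Q (X - C a)) * Q (C (-(g.eval a)⁻¹) * (g /ₘ (X - C a))) := by
        ring
    _ = _ := by rw [Ring.inverse_mul_cancel _ hu, one_mul]

lemma coeff_div_X_sub_C {F : Type*} [Field F] (g : F[X]) {t : ℕ} (hgdeg : g.natDegree = t)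
    (a : F) (l : ℕ) :
    (g /ₘ (X - C a)).coeff l = ∑ m ∈ Finset.range t, g.coeff (m + l + 1) * a ^ m := by
  rw [coeff_divByMonic_X_sub_C, hgdeg]
  rw [show Finset.range t = Finset.range (t - l) ∪ Finset.Ico (t - l) t by
    rw [Finset.range_eq_Ico, Finset.range_eq_Ico, Finset.Ico_union_Ico_eq_Ico] <;> omega]
  rw [Finset.sum_union (by rw [Finset.range_eq_Ico]; exact Finset.Ico_disjoint_Ico_consecutive 0 _ _)]
  rw [Finset.sum_eq_zero (s := Finset.Ico (t - l) t) (fun m hm => by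
    rw [Finset.mem_Ico] at hm
    rw [coeff_eq_zero_of_natDegree_lt (by omega), zero_mul]), add_zero]
  apply Finset.sum_nbij' (i := fun k => k - (l + 1)) (j := fun m => m + l + 1)
  · intro k hk; simp only [Finset.mem_Icc] at hk; simp only [Finset.mem_range]; omega
  · intro m hm; simp only [Finset.mem_range] at hm; simp only [Finset.mem_Icc]; omega
  · intro k hk; simp only [Finset.mem_Icc] at hk; omega
  · intro m hm; omega
  · intro k hk; simp only [Finset.mem_Icc] at hk
    rw [mul_comm]; congr 2 <;> omega

noncomputable def MTGoppa {F : Type*} [Field F] (K : Subfield F) {n : ℕ}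
    (α : Fin n → F) (g : F[X]) (t : ℕ) {L : ℕ} (tw hk : Fin (L + 1) → ℕ)
    (η : Fin (L + 1) → F) : Set (Fin n → F) :=
  {c | (∀ i, c i ∈ K) ∧
    ∑ i, (Ideal.Quotient.mk (Ideal.span {g})) (C (c i)) *
      (Ring.inverse ((Ideal.Quotient.mk (Ideal.span {g})) (X - C (α i))) -
        (Ideal.Quotient.mk (Ideal.span {g}))
          (∑ j, C (η j * α i ^ (t - 1 + tw j) / g.eval (α i)) *
            (g /ₘ X ^ (hk j + 1)))) = 0}

/-- `c ∈ Γ(L, g, 𝕥, 𝕙, η)` iff the `t` parity-check equations hold: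
for every `l < t` not a hook, `Σ_i c_i α_i^l g(α_i)⁻¹ = 0`, and for every hook
index `j`, `Σ_i c_i (α_i^(h_j) + η_j α_i^(t-1+t_j)) g(α_i)⁻¹ = 0`. -/
theorem stmt0 {F : Type*} [Field F] [Fintype F] (K : Subfield F)
    {n : ℕ} (α : Fin n → F) (hα : Function.Injective α)
    (g : F[X]) (t : ℕ) (ht : 1 ≤ t) (hgdeg : g.natDegree = t)
    (hgt : g.coeff t ≠ 0) (hgα : ∀ i, g.eval (α i) ≠ 0)
    {L : ℕ} (tw hk : Fin (L + 1) → ℕ)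
    (htw1 : ∀ j, 1 ≤ tw j) (htwmono : StrictMono tw)
    (hhkmono : StrictMono hk) (hhkt : ∀ j, hk j < t)
    (η : Fin (L + 1) → F)
    (c : Fin n → F) (hc : ∀ i, c i ∈ K) :
    c ∈ MTGoppa K α g t tw hk η ↔
      ((∀ l : ℕ, l < t → (∀ j, hk j ≠ l) →
          ∑ i, c i * α i ^ l / g.eval (α i) = 0) ∧
        ∀ j, ∑ i, c i * ((α i ^ hk j + η j * α i ^ (t - 1 + tw j)) / g.eval (α i)) = 0) := by
    classical
  have hg0 : g ≠ 0 := fun h => hgt (by simp [h])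
  set Q := Ideal.Quotient.mk (Ideal.span {g}) with hQdef
  set P : F[X] := ∑ i, C (c i) * (C (-(g.eval (α i))⁻¹) * (g /ₘ (X - C (α i))) -
      ∑ j, C (η j * α i ^ (t - 1 + tw j) / g.eval (α i)) * (g /ₘ X ^ (hk j + 1))) with hP
  -- definitions of s, e, v
  set s : ℕ → F := fun m => ∑ i, c i * α i ^ m / g.eval (α i) with hs
  set e : Fin (L + 1) → F := fun j => ∑ i, c i * (η j * α i ^ (t - 1 + tw j) / g.eval (α i))
    with he
  set v : ℕ → F := fun m => s m + ∑ j ∈ Finset.univ.filter (fun j => hk j = m), e j with hv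
  -- membership rewrite
  have hmem : c ∈ MTGoppa K α g t tw hk η ↔ Q P = 0 := by
    have hterm : ∀ i : Fin n, Q (C (c i)) * (Ring.inverse (Q (X - C (α i))) -
        Q (∑ j, C (η j * α i ^ (t - 1 + tw j) / g.eval (α i)) * (g /ₘ X ^ (hk j + 1)))) =
        Q (C (c i) * (C (-(g.eval (α i))⁻¹) * (g /ₘ (X - C (α i))) -
          ∑ j, C (η j * α i ^ (t - 1 + tw j) / g.eval (α i)) * (g /ₘ X ^ (hk j + 1)))) := by
      intro i
      rw [inv_X_sub_C g (α i) (hgα i), ← map_sub, ← map_mul]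
    unfold MTGoppa
    rw [Set.mem_setOf_eq, and_iff_right hc,
      Finset.sum_congr rfl (fun i _ => hterm i), hP, map_sum]
  -- degree bound
  have hPdeg : P.natDegree < t := by
    have h1 : P.natDegree ≤ t - 1 := by
      rw [hP]
      apply natDegree_sum_le_of_forall_le
      intro i _
      apply (natDegree_C_mul_le _ _).trans
      apply (natDegree_sub_le _ _).trans
      rw [max_le_iff]
      constructor
      · apply (natDegree_C_mul_le _ _).trans
        rw [natDegree_divByMonic g (monic_X_sub_C (α i)), natDegree_X_sub_C, hgdeg]
      · apply natDegree_sum_le_of_forall_le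
        intro j _
        apply (natDegree_C_mul_le _ _).trans
        rw [natDegree_divByMonic g (monic_X_pow _), natDegree_X_pow, hgdeg]
        omega
    omega
  -- quotient zero iff zero
  have hQP : Q P = 0 ↔ P = 0 := by
    rw [hQdef, Ideal.Quotient.eq_zero_iff_mem, Ideal.mem_span_singleton]
    constructor
    · intro hdvd
      by_contra hne
      have := natDegree_le_of_dvd hdvd hne
      omega
    · intro h; rw [h]; exact dvd_zero g
  -- coefficient formula
  have hcoeff : ∀ l : ℕ, -P.coeff l = ∑ m ∈ Finset.range t, g.coeff (m + l + 1) * v m := by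
    intro l
    have hfib : ∑ m ∈ Finset.range t, g.coeff (m + l + 1) *
        ∑ j ∈ Finset.univ.filter (fun j => hk j = m), e j
        = ∑ j, g.coeff (hk j + l + 1) * e j := by
      rw [← Finset.sum_fiberwise_of_maps_to (g := fun j => hk j)
        (fun j _ => Finset.mem_range.mpr (hhkt j)) (fun j => g.coeff (hk j + l + 1) * e j)]
      refine Finset.sum_congr rfl fun m _ => ?_
      rw [Finset.mul_sum]
      refine Finset.sum_congr rfl fun j hj => ?_
      rw [(Finset.mem_filter.mp hj).2]
    have hv' : ∑ m ∈ Finset.range t, g.coeff (m + l + 1) * v m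
        = ∑ m ∈ Finset.range t, g.coeff (m + l + 1) * s m
          + ∑ j, g.coeff (hk j + l + 1) * e j := by
      rw [← hfib, ← Finset.sum_add_distrib]
      refine Finset.sum_congr rfl fun m _ => ?_
      rw [hv, mul_add]
    have hA : ∑ m ∈ Finset.range t, g.coeff (m + l + 1) * s m
        = ∑ i, c i * (g.eval (α i))⁻¹ * ∑ m ∈ Finset.range t, g.coeff (m + l + 1) * α i ^ m := by
      simp only [hs, Finset.mul_sum]
      rw [Finset.sum_comm]
      refine Finset.sum_congr rfl fun i _ => Finset.sum_congr rfl fun m _ => by ring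
    have hB : ∑ j, g.coeff (hk j + l + 1) * e j
        = ∑ i, ∑ j, c i * (η j * α i ^ (t - 1 + tw j) / g.eval (α i))
            * g.coeff (l + (hk j + 1)) := by
      simp only [he, Finset.mul_sum]
      rw [Finset.sum_comm]
      refine Finset.sum_congr rfl fun i _ => Finset.sum_congr rfl fun j _ => ?_
      rw [show l + (hk j + 1) = hk j + l + 1 by omega]; ring
    rw [hv', hA, hB, ← Finset.sum_add_distrib, hP, finset_sum_coeff,
      ← Finset.sum_neg_distrib]
    refine Finset.sum_congr rfl fun i _ => ?_
    simp only [coeff_C_mul, coeff_sub, finset_sum_coeff, coeff_div_X_pow,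
      coeff_div_X_sub_C g hgdeg]
    rw [mul_sub, neg_sub, Finset.mul_sum, sub_eq_add_neg, add_comm]
    congr 1
    · ring
    · exact Finset.sum_congr rfl fun j _ => by ring
  -- P = 0 ↔ all v m vanish
  have hPzero : P = 0 ↔ ∀ m < t, v m = 0 := by
    constructor
    · intro hp
      refine tri_system t g.coeff hgt
        (fun k hk' => coeff_eq_zero_of_natDegree_lt (by omega)) v (fun l _ => ?_)
      rw [← hcoeff l, hp, coeff_zero, neg_zero]
    · intro hvz
      refine Polynomial.ext fun l => ?_
      rw [coeff_zero]
      by_cases hl : l < t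
      · have h0 := hcoeff l
        rw [Finset.sum_eq_zero
          (fun m hm => by rw [hvz m (Finset.mem_range.mp hm), mul_zero])] at h0
        exact neg_eq_zero.mp h0
      · exact coeff_eq_zero_of_natDegree_lt (by omega)
  have hhkinj := hhkmono.injective
  have hsplit : ∀ j, ∑ i, c i * ((α i ^ hk j + η j * α i ^ (t - 1 + tw j)) / g.eval (α i))
      = s (hk j) + e j := by
    intro j
    simp only [hs, he]
    rw [← Finset.sum_add_distrib]
    exact Finset.sum_congr rfl fun i _ => by ring
  have hfilter : ∀ j : Fin (L + 1), Finset.univ.filter (fun j' => hk j' = hk j) = {j} := by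
    intro j
    ext j'
    simp only [Finset.mem_filter, Finset.mem_univ, true_and, Finset.mem_singleton]
    exact ⟨fun h => hhkinj h, fun h => by rw [h]⟩
  rw [hmem, hQP, hPzero]
  constructor
  · intro hvz
    constructor
    · intro l hl hnon
      have h0 := hvz l hl
      rw [hv] at h0
      simp only at h0
      rw [Finset.filter_eq_empty_iff.mpr (fun j _ => hnon j), Finset.sum_empty,
        add_zero] at h0
      simpa [hs] using h0
    · intro j
      have h0 := hvz (hk j) (hhkt j)
      rw [hv] at h0
      simp only at h0
      rw [hfilter j, Finset.sum_singleton] at h0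
      rw [hsplit j]
      exact h0
  · intro ⟨h1, h2⟩ m hm
    rw [hv]
    simp only
    by_cases hex : ∃ j, hk j = m
    · obtain ⟨j, rfl⟩ := hex
      rw [hfilter j, Finset.sum_singleton, ← hsplit j]
      exact h2 j
    · push_neg at hex
      rw [Finset.filter_eq_empty_iff.mpr (fun j _ => hex j), Finset.sum_empty, add_zero]
      simpa [hs] using h1 m hm (fun j => hex j)
end

section
/- Suppose there is a chain of subfields 𝔽_q ⊆ 𝔽_{s_0} ⊊ 𝔽_{s_1} ⊊ ⋯ ⊊ 𝔽_{s_ℓ} = 𝔽_{q^m} such that L ⊆ 𝔽_{s_0}, all coefficients of g lie in 𝔽_{s_0}, and η_j ∈ 𝔽_{s_j} ∖ 𝔽_{s_{j−1}} for every 1 ≤ j ≤ ℓ. Then every nonzero codeword of the multi-twisted Goppa code Γ(L, g, 𝕥, 𝕙, η) has Hamming weight at least t + 1; in particular the minimum distance of Γ(L, g, 𝕥, 𝕙, η) is at least t + 1. -/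
open Polynomial

attribute [local instance] Classical.propDecidable

/- ## Auxiliary definitions and lemmas -/

/-- Representative of the inverse of `X - C a` modulo `g`. -/
noncomputable def Qp {F : Type*} [Field F] (g : F[X]) (a : F) : F[X] :=
  C (-(g.eval a)⁻¹) * ((g - C (g.eval a)) /ₘ (X - C a))

/-- The twist polynomial attached to a support element `a`. -/
noncomputable def Tp {F : Type*} [Field F] (g : F[X]) (t : ℕ) {L : ℕ}
    (tw hk : Fin (L + 1) → ℕ) (η : Fin (L + 1) → F) (a : F) : F[X] :=
  ∑ j, C (η j * a ^ (t - 1 + tw j) / g.eval a) * (g /ₘ X ^ (hk j + 1))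

lemma ringInverse_eq_of_mul_eq_one {R : Type*} [CommRing R] {a b : R} (h : a * b = 1) :
    Ring.inverse a = b := by
  have hu : IsUnit a := IsUnit.of_mul_eq_one _ h
  calc Ring.inverse a = Ring.inverse a * (a * b) := by rw [h, mul_one]
    _ = Ring.inverse a * a * b := (mul_assoc _ _ _).symm
    _ = b := by rw [Ring.inverse_mul_cancel _ hu, one_mul]

lemma coeff_divByMonic_X_pow {R : Type*} [CommRing R] (g : R[X]) (m k : ℕ) :
    (g /ₘ X ^ m).coeff k = g.coeff (k + m) := by
  nontriviality R
  conv_rhs => rw [← modByMonic_add_div g (X ^ m)]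
  rw [coeff_add, coeff_X_pow_mul,
    coeff_eq_zero_of_degree_lt (lt_of_lt_of_le (degree_modByMonic_lt g (monic_X_pow m)) ?_),
    zero_add]
  rw [degree_X_pow]
  exact_mod_cast Nat.le_add_left m k

lemma eval_mem_subfield {F : Type*} [Field F] (S : Subfield F) {g : F[X]}
    (hg : ∀ k, g.coeff k ∈ S) {a : F} (ha : a ∈ S) : g.eval a ∈ S := by
  rw [eval_eq_sum_range]
  exact sum_mem fun i _ => mul_mem (hg i) (pow_mem ha i)

lemma X_sub_C_mul_divByMonic {F : Type*} [Field F] (g : F[X]) (a : F) :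
    (X - C a) * ((g - C (g.eval a)) /ₘ (X - C a)) = g - C (g.eval a) := by
  have h := modByMonic_add_div (g - C (g.eval a)) (X - C a)
  rwa [modByMonic_X_sub_C_eq_C_eval, eval_sub, eval_C, sub_self, C_0, zero_add] at h

lemma mk_inverse_X_sub_C {F : Type*} [Field F] (g : F[X]) {a : F} (ha : g.eval a ≠ 0) :
    Ring.inverse ((Ideal.Quotient.mk (Ideal.span {g})) (X - C a))
      = (Ideal.Quotient.mk (Ideal.span {g})) (Qp g a) := by
  apply ringInverse_eq_of_mul_eq_one
  rw [← map_mul]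
  have hpoly : (X - C a) * Qp g a = C (-(g.eval a)⁻¹) * g + 1 := by
    calc (X - C a) * Qp g a
        = C (-(g.eval a)⁻¹) * ((X - C a) * ((g - C (g.eval a)) /ₘ (X - C a))) := by
          simp only [Qp]; ring
      _ = C (-(g.eval a)⁻¹) * (g - C (g.eval a)) := by rw [X_sub_C_mul_divByMonic]
      _ = C (-(g.eval a)⁻¹) * g + C ((g.eval a)⁻¹ * g.eval a) := by
          simp only [C_neg, C_mul]; ring
      _ = C (-(g.eval a)⁻¹) * g + 1 := by rw [inv_mul_cancel₀ ha, C_1]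
  rw [hpoly, map_add, map_mul, Ideal.Quotient.mk_singleton_self, mul_zero, zero_add, map_one]

lemma coeff_divByMonic_mem {F : Type*} [Field F] (S : Subfield F) {p q : F[X]}
    (hp : ∀ k, p.coeff k ∈ S) (hq : ∀ k, q.coeff k ∈ S) (hm : q.Monic) (k : ℕ) :
    (p /ₘ q).coeff k ∈ S := by
  have hp' : p ∈ lifts S.subtype := (lifts_iff_coeff_lifts _).2 fun m => ⟨⟨_, hp m⟩, rfl⟩
  have hq' : q ∈ lifts S.subtype := (lifts_iff_coeff_lifts _).2 fun m => ⟨⟨_, hq m⟩, rfl⟩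
  obtain ⟨q₀, hq₀, -, hq₀m⟩ := lifts_and_degree_eq_and_monic hq' hm
  obtain ⟨p₀, hp₀⟩ := (mem_lifts _).1 hp'
  rw [← hp₀, ← hq₀, ← map_divByMonic _ hq₀m, coeff_map]
  exact ((p₀ /ₘ q₀).coeff k).2

/-- The classical Goppa distance argument: if the "untwisted" syndrome polynomial vanishes
identically, then a nonzero codeword has weight at least `t + 1`. -/
lemma goppa_classical {F : Type*} [Field F] {n : ℕ} {α : Fin n → F} (hα : Function.Injective α)
    {g : F[X]} {t : ℕ} (ht : 1 ≤ t) (hgdeg : g.natDegree = t) (hg0 : g ≠ 0)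
    (hgα : ∀ i, g.eval (α i) ≠ 0) {c : Fin n → F} (hc0 : c ≠ 0)
    (hA : ∑ i, C (c i) * Qp g (α i) = 0)
    (hw : (Finset.univ.filter fun i => c i ≠ 0).card ≤ t) : False := by
  classical
  simp only [Qp] at hA
  set s : Finset (Fin n) := Finset.univ.filter fun i => c i ≠ 0 with hs
  have hsne : s.Nonempty := by
    rcases Function.ne_iff.1 hc0 with ⟨i, hi⟩
    have hi' : c i ≠ 0 := by simpa using hi
    exact ⟨i, by simp [hs, hi']⟩
  obtain ⟨i₀, hi₀⟩ := hsne
  have hci₀ : c i₀ ≠ 0 := by simpa [hs] using hi₀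
  -- restrict the vanishing sum to the support and multiply by the locator polynomial
  have h2 : ∑ i ∈ s, C (c i) * (C (-(g.eval (α i))⁻¹) * ((g - C (g.eval (α i))) /ₘ (X - C (α i))))
      * ((X - C (α i)) * ∏ k ∈ s.erase i, (X - C (α k))) = 0 := by
    have hres : ∑ i ∈ s, C (c i) * (C (-(g.eval (α i))⁻¹)
        * ((g - C (g.eval (α i))) /ₘ (X - C (α i)))) = 0 := by
      rw [Finset.sum_subset (Finset.subset_univ s) (fun i _ hi => by
        have : c i = 0 := by simpa [hs] using hi
        simp [this])]
      exact hA
    calc ∑ i ∈ s, C (c i) * (C (-(g.eval (α i))⁻¹) * ((g - C (g.eval (α i))) /ₘ (X - C (α i))))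
          * ((X - C (α i)) * ∏ k ∈ s.erase i, (X - C (α k)))
        = ∑ i ∈ s, C (c i) * (C (-(g.eval (α i))⁻¹) * ((g - C (g.eval (α i))) /ₘ (X - C (α i))))
          * ∏ k ∈ s, (X - C (α k)) :=
          Finset.sum_congr rfl fun i hi => by
            rw [Finset.mul_prod_erase s (fun k => X - C (α k)) hi]
      _ = (∑ i ∈ s, C (c i) * (C (-(g.eval (α i))⁻¹)
            * ((g - C (g.eval (α i))) /ₘ (X - C (α i))))) * ∏ k ∈ s, (X - C (α k)) := by
          rw [Finset.sum_mul]
      _ = 0 := by rw [hres, zero_mul]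
  -- term-by-term rewriting
  have hterm : ∀ i ∈ s, C (c i) * (C (-(g.eval (α i))⁻¹)
      * ((g - C (g.eval (α i))) /ₘ (X - C (α i))))
      * ((X - C (α i)) * ∏ k ∈ s.erase i, (X - C (α k)))
      = g * (C (-(c i * (g.eval (α i))⁻¹)) * ∏ k ∈ s.erase i, (X - C (α k)))
        + C (c i) * ∏ k ∈ s.erase i, (X - C (α k)) := by
    intro i _
    have hvw : C ((g.eval (α i))⁻¹) * C (g.eval (α i)) = 1 := by
      rw [← C_mul, inv_mul_cancel₀ (hgα i), C_1]
    calc C (c i) * (C (-(g.eval (α i))⁻¹) * ((g - C (g.eval (α i))) /ₘ (X - C (α i))))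
          * ((X - C (α i)) * ∏ k ∈ s.erase i, (X - C (α k)))
        = C (c i) * C (-(g.eval (α i))⁻¹)
            * ((X - C (α i)) * ((g - C (g.eval (α i))) /ₘ (X - C (α i))))
            * ∏ k ∈ s.erase i, (X - C (α k)) := by ring
      _ = C (c i) * C (-(g.eval (α i))⁻¹) * (g - C (g.eval (α i)))
            * ∏ k ∈ s.erase i, (X - C (α k)) := by rw [X_sub_C_mul_divByMonic]
      _ = g * (C (-(c i * (g.eval (α i))⁻¹)) * ∏ k ∈ s.erase i, (X - C (α k)))
            + C (c i) * (C ((g.eval (α i))⁻¹) * C (g.eval (α i)))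
              * ∏ k ∈ s.erase i, (X - C (α k)) := by
          simp only [C_neg, C_mul]; ring
      _ = _ := by rw [hvw, mul_one]
  -- hence R = g * (-B)
  have hRB : (∑ i ∈ s, C (c i) * ∏ k ∈ s.erase i, (X - C (α k)))
      = g * (-∑ i ∈ s, C (-(c i * (g.eval (α i))⁻¹)) * ∏ k ∈ s.erase i, (X - C (α k))) := by
    have h3 := (Finset.sum_congr rfl hterm).symm.trans h2
    rw [Finset.sum_add_distrib, ← Finset.mul_sum] at h3
    linear_combination h3
  -- R is nonzero since its value at α i₀ is nonzero
  have hReval : (∑ i ∈ s, C (c i) * ∏ k ∈ s.erase i, (X - C (α k))).eval (α i₀)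
      = c i₀ * ∏ k ∈ s.erase i₀, (α i₀ - α k) := by
    rw [eval_finset_sum, Finset.sum_eq_single i₀]
    · simp [eval_prod]
    · intro i _ hne
      have hi₀mem : i₀ ∈ s.erase i := Finset.mem_erase.2 ⟨fun h => hne h.symm, hi₀⟩
      rw [eval_mul, eval_prod, Finset.prod_eq_zero hi₀mem (by simp), mul_zero]
    · intro h; exact absurd hi₀ h
  have hReval0 : (∑ i ∈ s, C (c i) * ∏ k ∈ s.erase i, (X - C (α k))).eval (α i₀) ≠ 0 := by
    rw [hReval]
    refine mul_ne_zero hci₀ (Finset.prod_ne_zero_iff.2 fun k hk => ?_)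
    have hk' : k ≠ i₀ := (Finset.mem_erase.1 hk).1
    exact sub_ne_zero_of_ne fun h => hk' (hα h.symm)
  have hR0 : (∑ i ∈ s, C (c i) * ∏ k ∈ s.erase i, (X - C (α k))) ≠ 0 := fun h => by
    rw [h] at hReval0; simp at hReval0
  -- degree bound
  have hRdeg : (∑ i ∈ s, C (c i) * ∏ k ∈ s.erase i, (X - C (α k))).natDegree ≤ s.card - 1 := by
    refine natDegree_sum_le_of_forall_le _ _ fun i hi => ?_
    refine le_trans (natDegree_C_mul_le _ _) (le_trans (natDegree_prod_le _ _) ?_)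
    refine le_trans (Finset.sum_le_card_nsmul _ _ 1 fun k _ => le_of_eq (natDegree_X_sub_C _)) ?_
    rw [Finset.card_erase_of_mem hi]
    simp
  -- contradiction via degrees
  have hB0 : (-∑ i ∈ s, C (-(c i * (g.eval (α i))⁻¹)) * ∏ k ∈ s.erase i, (X - C (α k))) ≠ 0 := by
    intro h
    rw [h, mul_zero] at hRB
    exact hR0 hRB
  have hdeg := natDegree_mul hg0 hB0
  rw [← hRB, hgdeg] at hdeg
  have hcard1 : 1 ≤ s.card := Finset.card_pos.2 ⟨i₀, hi₀⟩
  omega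

theorem stmt1 {F : Type*} [Field F] [Fintype F] (K : Subfield F)
    {n : ℕ} (α : Fin n → F) (hα : Function.Injective α)
    (g : F[X]) (t : ℕ) (ht : 1 ≤ t) (hgdeg : g.natDegree = t)
    (hgt : g.coeff t ≠ 0) (hgα : ∀ i, g.eval (α i) ≠ 0)
    {L : ℕ} (tw hk : Fin (L + 1) → ℕ)
    (htw1 : ∀ j, 1 ≤ tw j) (htwmono : StrictMono tw)
    (hhkmono : StrictMono hk) (hhkt : ∀ j, hk j < t)
    (η : Fin (L + 1) → F)
    (Sf : Fin (L + 2) → Subfield F)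
    (hKS : K ≤ Sf 0)
    (hchain : ∀ j : Fin (L + 1), Sf j.castSucc < Sf j.succ)
    (hSlast : Sf (Fin.last (L + 1)) = ⊤)
    (hLS : ∀ i, α i ∈ Sf 0)
    (hgS : ∀ k : ℕ, g.coeff k ∈ Sf 0)
    (hηS : ∀ j : Fin (L + 1), η j ∈ Sf j.succ ∧ η j ∉ Sf j.castSucc) :
    ∀ c ∈ MTGoppa K α g t tw hk η, c ≠ 0 →
      t + 1 ≤ (Finset.univ.filter fun i => c i ≠ 0).card := by
  intro c hc hc0
  obtain ⟨hcK, hsyn⟩ := hc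
  by_contra hcard
  push_neg at hcard
  have hw : (Finset.univ.filter fun i => c i ≠ 0).card ≤ t := by omega
  have hg0 : g ≠ 0 := fun h => hgt (by simp [h])
  have hcS : ∀ i, c i ∈ Sf 0 := fun i => hKS (hcK i)
  have hmono : Monotone Sf := (Fin.strictMono_iff_lt_succ.2 hchain).monotone
  -- the syndrome as the image of a single polynomial
  have hsyn' : (Ideal.Quotient.mk (Ideal.span {g}))
      (∑ i, C (c i) * (Qp g (α i) - Tp g t tw hk η (α i))) = 0 := by
    rw [map_sum, ← hsyn]
    refine Finset.sum_congr rfl fun i _ => ?_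
    rw [map_mul, map_sub, mk_inverse_X_sub_C g (hgα i)]
    simp only [Tp]
  have hPdvd : g ∣ ∑ i, C (c i) * (Qp g (α i) - Tp g t tw hk η (α i)) :=
    (Ideal.Quotient.eq_zero_iff_dvd _ _).1 hsyn'
  -- the syndrome polynomial vanishes identically by degree reasons
  have hP0 : ∑ i, C (c i) * (Qp g (α i) - Tp g t tw hk η (α i)) = 0 := by
    by_contra hne
    have h1 := natDegree_le_of_dvd hPdvd hne
    rw [hgdeg] at h1
    have h2 : (∑ i, C (c i) * (Qp g (α i) - Tp g t tw hk η (α i))).natDegree ≤ t - 1 := by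
      refine natDegree_sum_le_of_forall_le _ _ fun i _ => le_trans (natDegree_C_mul_le _ _) ?_
      refine le_trans (natDegree_sub_le _ _) (max_le ?_ ?_)
      · simp only [Qp]
        refine le_trans (natDegree_C_mul_le _ _) ?_
        rw [natDegree_divByMonic _ (monic_X_sub_C (α i)), natDegree_X_sub_C]
        have h3 : (g - C (g.eval (α i))).natDegree ≤ t :=
          le_trans (natDegree_sub_le _ _) (by rw [hgdeg, natDegree_C]; omega)
        omega
      · simp only [Tp]
        refine natDegree_sum_le_of_forall_le _ _ fun j _ => le_trans (natDegree_C_mul_le _ _) ?_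
        rw [natDegree_divByMonic _ (monic_X_pow _), natDegree_X_pow, hgdeg]
        have := hhkt j
        omega
    omega
  -- coefficients of Qp lie in the base subfield
  have hQcoeff : ∀ (i : Fin n) (k : ℕ), (Qp g (α i)).coeff k ∈ Sf 0 := by
    intro i k
    simp only [Qp, coeff_C_mul]
    refine mul_mem (neg_mem (inv_mem (eval_mem_subfield _ hgS (hLS i)))) ?_
    refine coeff_divByMonic_mem _ (fun m => ?_) (fun m => ?_) (monic_X_sub_C _) k
    · rw [coeff_sub, coeff_C]
      refine sub_mem (hgS m) ?_
      split_ifs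
      · exact eval_mem_subfield _ hgS (hLS i)
      · exact zero_mem _
    · rw [coeff_sub, coeff_X, coeff_C]
      split_ifs <;>
        exact sub_mem (by first | exact one_mem _ | exact zero_mem _)
          (by first | exact hLS i | exact zero_mem _)
  -- the twist coefficients
  set b : Fin (L + 1) → F := fun j => ∑ i, c i * α i ^ (t - 1 + tw j) / g.eval (α i) with hbdef
  have hbS : ∀ j, b j ∈ Sf 0 := by
    intro j
    rw [hbdef]
    exact sum_mem fun i _ =>
      div_mem (mul_mem (hcS i) (pow_mem (hLS i) _)) (eval_mem_subfield _ hgS (hLS i))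
  have hAS : ∀ k, (∑ i, c i * (Qp g (α i)).coeff k) ∈ Sf 0 := fun k =>
    sum_mem fun i _ => mul_mem (hcS i) (hQcoeff i k)
  -- the coefficient identity
  have hPcoeff : ∀ k, (∑ i, c i * (Qp g (α i)).coeff k)
      = ∑ j, η j * b j * g.coeff (k + hk j + 1) := by
    intro k
    have h := congrArg (fun p : F[X] => p.coeff k) hP0
    simp only [finset_sum_coeff, coeff_C_mul, coeff_sub, coeff_zero, mul_sub] at h
    rw [Finset.sum_sub_distrib, sub_eq_zero] at h
    refine h.trans ?_
    have key : ∀ i, c i * (Tp g t tw hk η (α i)).coeff k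
        = ∑ j, η j * (c i * α i ^ (t - 1 + tw j) / g.eval (α i)) * g.coeff (k + hk j + 1) := by
      intro i
      simp only [Tp, finset_sum_coeff, coeff_C_mul, coeff_divByMonic_X_pow, Finset.mul_sum]
      refine Finset.sum_congr rfl fun j _ => ?_
      rw [(by omega : k + (hk j + 1) = k + hk j + 1)]
      simp only [div_eq_mul_inv]; ring
    calc (∑ i, c i * (Tp g t tw hk η (α i)).coeff k)
        = ∑ i, ∑ j, η j * (c i * α i ^ (t - 1 + tw j) / g.eval (α i))
            * g.coeff (k + hk j + 1) := Finset.sum_congr rfl fun i _ => key i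
      _ = ∑ j, ∑ i, η j * (c i * α i ^ (t - 1 + tw j) / g.eval (α i))
            * g.coeff (k + hk j + 1) := Finset.sum_comm
      _ = ∑ j, η j * b j * g.coeff (k + hk j + 1) := by
          refine Finset.sum_congr rfl fun j _ => ?_
          simp only [hbdef]
          rw [← Finset.sum_mul, ← Finset.mul_sum]
  -- the twist coefficients vanish, by induction along the chain of subfields
  have step : ∀ j : Fin (L + 1), (∀ j' : Fin (L + 1), j' < j → b j' = 0) → b j = 0 := by
    intro j hind
    by_contra hbj
    have hkjt := hhkt j
    have hsum : ∑ j', η j' * b j' * g.coeff (t - 1 - hk j + hk j' + 1)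
        = η j * b j * g.coeff t := by
      rw [Finset.sum_eq_single j]
      · rw [(by omega : t - 1 - hk j + hk j + 1 = t)]
      · intro j' _ hne
        rcases lt_or_gt_of_ne hne with hlt | hgt'
        · rw [hind j' hlt]; ring
        · have hh : hk j < hk j' := hhkmono hgt'
          rw [coeff_eq_zero_of_natDegree_lt (by rw [hgdeg]; omega)]; ring
      · intro h; exact absurd (Finset.mem_univ j) h
    have heq := hPcoeff (t - 1 - hk j)
    rw [hsum] at heq
    have hmem : η j ∈ Sf 0 := by
      have hval : η j = (∑ i, c i * (Qp g (α i)).coeff (t - 1 - hk j)) / (b j * g.coeff t) := by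
        rw [heq, mul_assoc, mul_div_assoc, div_self (mul_ne_zero hbj hgt), mul_one]
      rw [hval]
      exact div_mem (hAS _) (mul_mem (hbS j) (hgS t))
    exact (hηS j).2 (hmono (Fin.zero_le _) hmem)
  have hbz : ∀ j, b j = 0 := by
    have H : ∀ N : ℕ, ∀ j : Fin (L + 1), (j : ℕ) < N → b j = 0 := by
      intro N
      induction N with
      | zero => exact fun j hj => absurd hj (Nat.not_lt_zero _)
      | succ N ih =>
        intro j hj
        refine step j fun j' hj' => ih j' ?_
        have : (j' : ℕ) < (j : ℕ) := hj'
        omega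
    exact fun j => H (L + 2) j (by omega)
  -- hence the untwisted syndrome polynomial vanishes
  have hApoly : ∑ i, C (c i) * Qp g (α i) = 0 := by
    ext k
    rw [finset_sum_coeff]
    simp only [coeff_C_mul, coeff_zero]
    rw [hPcoeff k]
    simp [hbz]
  exact goppa_classical hα ht hgdeg hg0 hgα hc0 hApoly hw
end

section
/- Assume that for every k with 1 ≤ k ≤ n one has Σ_{j=1}^ℓ g_{h_j} η_j α_k^{t−1+t_j} = g_t α_k^t. Then every codeword c = (c_1, …, c_n) of the multi-twisted Goppa code Γ(L, g, 𝕥, 𝕙, η) satisfies Σ_{i=1}^n c_i = 0; consequently the expurgated code Γ̃(L, g, 𝕥, 𝕙, η) := {c ∈ Γ(L, g, 𝕥, 𝕙, η) : Σ_{i=1}^n c_i = 0} coincides with Γ(L, g, 𝕥, 𝕙, η). -/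
open Polynomial

attribute [local instance] Classical.propDecidable

section MTGoppaAux
open Finset
variable {F : Type*} [Field F]

lemma myCoeffDiv (g : F[X]) (m k : ℕ) : (g /ₘ X ^ m).coeff k = g.coeff (k + m) := by
  conv_rhs => rw [← g.modByMonic_add_div (X ^ m)]
  rw [coeff_add, coeff_X_pow_mul]
  have hd : (g %ₘ X ^ m).degree < (m : ℕ) := by
    simpa [degree_X_pow] using degree_modByMonic_lt g (monic_X_pow m)
  rw [coeff_eq_zero_of_degree_lt (lt_of_lt_of_le hd (by exact_mod_cast Nat.le_add_left m k)),
    zero_add]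

lemma myXMulDiv (g : F[X]) (h : ℕ) :
    X * (g /ₘ X ^ (h + 1)) = g /ₘ X ^ h - C (g.coeff h) := by
  ext k
  rcases k with _ | k
  · simp [coeff_X_mul, myCoeffDiv, coeff_C]
  · simp [coeff_X_mul, myCoeffDiv, coeff_C]
    ring_nf

lemma myDivTop (g : F[X]) {t : ℕ} (hdeg : g.natDegree = t) :
    g /ₘ X ^ t = C (g.coeff t) := by
  ext k
  rcases k with _ | k
  · simp [myCoeffDiv]
  · rw [myCoeffDiv, coeff_C]
    rw [coeff_eq_zero_of_natDegree_lt (by omega : g.natDegree < k + 1 + t)]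
    simp

lemma myProd (g : F[X]) {t : ℕ} (hdeg : g.natDegree = t) (a : F) :
    (X - C a) * ∑ h ∈ range t, C (a ^ h) * (g /ₘ X ^ (h + 1)) = g - C (g.eval a) := by
  rw [Finset.mul_sum]
  have hterm : ∀ h ∈ range t, (X - C a) * (C (a ^ h) * (g /ₘ X ^ (h + 1)))
      = (C (a ^ h) * (g /ₘ X ^ h) - C (a ^ (h + 1)) * (g /ₘ X ^ (h + 1)))
        - C (g.coeff h * a ^ h) := by
    intro h _
    have h1 : (X : F[X]) * (g /ₘ X ^ (h+1)) = g /ₘ X ^ h - C (g.coeff h) := myXMulDiv g h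
    have h2 : (C (a ^ (h+1)) : F[X]) = C a * C (a ^ h) := by rw [← C_mul, pow_succ, mul_comm]
    have h3 : (C (g.coeff h * a ^ h) : F[X]) = C (g.coeff h) * C (a ^ h) := by rw [← C_mul]
    calc (X - C a) * (C (a ^ h) * (g /ₘ X ^ (h + 1)))
        = C (a ^ h) * (X * (g /ₘ X ^ (h+1))) - C a * (C (a^h) * (g /ₘ X ^ (h+1))) := by ring
      _ = _ := by rw [h1, h2, h3]; ring
  rw [Finset.sum_congr rfl hterm, Finset.sum_sub_distrib, Finset.sum_range_sub'
    (fun h => C (a ^ h) * (g /ₘ X ^ h))]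
  rw [myDivTop g hdeg]
  have he : g.eval a = (∑ h ∈ range t, g.coeff h * a ^ h) + g.coeff t * a ^ t := by
    rw [eval_eq_sum_range, hdeg, Finset.sum_range_succ]
  have h0 : g /ₘ X ^ 0 = g := by rw [pow_zero, divByMonic_one]
  have hc : ∑ x ∈ range t, (C (g.coeff x * a ^ x) : F[X]) = C (∑ x ∈ range t, g.coeff x * a ^ x) :=
    (map_sum C _ _).symm
  rw [h0, hc, he]
  simp only [pow_zero, map_one, one_mul, map_add, map_mul, ← C_pow]
  ring

lemma myTri (g : F[X]) {t : ℕ} (hdeg : g.natDegree = t) (hgt : g.coeff t ≠ 0)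
    (w : ℕ → F) (hw : ∑ h ∈ range t, C (w h) * (g /ₘ X ^ (h + 1)) = 0) :
    ∀ h < t, w h = 0 := by
  intro h
  induction h using Nat.strong_induction_on with
  | _ h IH =>
    intro hht
    have hc := congrArg (fun p => Polynomial.coeff p (t - 1 - h)) hw
    simp only [finset_sum_coeff, coeff_C_mul, myCoeffDiv, coeff_zero] at hc
    rw [Finset.sum_eq_single h] at hc
    · have hidx : t - 1 - h + (h + 1) = t := by omega
      rw [hidx] at hc
      exact (mul_eq_zero.1 hc).resolve_right hgt
    · intro b hb hbne
      rcases lt_or_gt_of_ne hbne with hlt | hgt'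
      · rw [IH b hlt (by omega), zero_mul]
      · rw [coeff_eq_zero_of_natDegree_lt (by omega : g.natDegree < t - 1 - h + (b + 1)),
          mul_zero]
    · intro habs
      exact absurd (Finset.mem_range.2 hht) habs

end MTGoppaAux

/-- if `Σ_j g_{h_j} η_j α_k^{t-1+t_j} = g_t α_k^t` for all `k`, then
every codeword of `Γ(L, g, 𝕥, 𝕙, η)` has coordinate sum zero; consequently the
expurgated code `Γ̃ = {c ∈ Γ : Σ_i c_i = 0}` coincides with `Γ`. -/
theorem stmt2 {F : Type*} [Field F] [Fintype F] (K : Subfield F)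
    {n : ℕ} (α : Fin n → F) (hα : Function.Injective α)
    (g : F[X]) (t : ℕ) (ht : 1 ≤ t) (hgdeg : g.natDegree = t)
    (hgt : g.coeff t ≠ 0) (hgα : ∀ i, g.eval (α i) ≠ 0)
    {L : ℕ} (tw hk : Fin (L + 1) → ℕ)
    (htw1 : ∀ j, 1 ≤ tw j) (htwmono : StrictMono tw)
    (hhkmono : StrictMono hk) (hhkt : ∀ j, hk j < t)
    (η : Fin (L + 1) → F)
    (hcond : ∀ k : Fin n,
      ∑ j, g.coeff (hk j) * η j * α k ^ (t - 1 + tw j) = g.coeff t * α k ^ t) :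
    (∀ c ∈ MTGoppa K α g t tw hk η, ∑ i, c i = 0) ∧
    {c | c ∈ MTGoppa K α g t tw hk η ∧ ∑ i, c i = 0} = MTGoppa K α g t tw hk η := by
  classical
  have main : ∀ c ∈ MTGoppa K α g t tw hk η, ∑ i, c i = 0 := by
    intro c hcmem
    obtain ⟨-, hsum⟩ := hcmem
    let π := Ideal.Quotient.mk (Ideal.span {g} : Ideal F[X])
    -- abbreviations
    let G : ℕ → F[X] := fun h => g /ₘ X ^ (h + 1)
    let hA : Fin n → F[X] := fun i => ∑ h ∈ Finset.range t, C (α i ^ h) * G h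
    -- the inverse of X - C (α i) in the quotient
    have hunit : ∀ i, π (X - C (α i)) * π (C (-(g.eval (α i))⁻¹) * hA i) = 1 := by
      intro i
      have hei : g.eval (α i) ≠ 0 := hgα i
      have hprod : (X - C (α i)) * (C (-(g.eval (α i))⁻¹) * hA i)
          = C (-(g.eval (α i))⁻¹) * g - C (-1 : F) := by
        have hmp := myProd g hgdeg (α i)
        calc (X - C (α i)) * (C (-(g.eval (α i))⁻¹) * hA i)
            = C (-(g.eval (α i))⁻¹) * ((X - C (α i)) * hA i) := by ring
          _ = C (-(g.eval (α i))⁻¹) * (g - C (g.eval (α i))) := by rw [hmp]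
          _ = C (-(g.eval (α i))⁻¹) * g - C (-(g.eval (α i))⁻¹) * C (g.eval (α i)) := by ring
          _ = _ := by rw [← C_mul, neg_mul, inv_mul_cancel₀ hei]
      rw [← map_mul, hprod, map_sub]
      have hz : π (C (-(g.eval (α i))⁻¹) * g) = 0 := Ideal.Quotient.eq_zero_iff_mem.2
        (Ideal.mem_span_singleton.2 (dvd_mul_left g _))
      rw [hz, zero_sub]
      simp
    have hinv : ∀ i, Ring.inverse (π (X - C (α i))) = π (C (-(g.eval (α i))⁻¹) * hA i) := by
      intro i
      have hu : IsUnit (π (X - C (α i))) := IsUnit.of_mul_eq_one _ (hunit i)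
      calc Ring.inverse (π (X - C (α i)))
          = Ring.inverse (π (X - C (α i)))
            * (π (X - C (α i)) * π (C (-(g.eval (α i))⁻¹) * hA i)) := by
            rw [hunit i, mul_one]
        _ = (Ring.inverse (π (X - C (α i))) * π (X - C (α i)))
            * π (C (-(g.eval (α i))⁻¹) * hA i) := by ring
        _ = _ := by rw [Ring.inverse_mul_cancel _ hu, one_mul]
    -- the syndrome polynomial
    let u : Fin n → Fin (L + 1) → F := fun i j => η j * α i ^ (t - 1 + tw j) / g.eval (α i)
    let P : F[X] := ∑ i, C (c i) *
      (C (-(g.eval (α i))⁻¹) * hA i - ∑ j, C (u i j) * G (hk j))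
    have hπP : π P = 0 := by
      simp only [π] at hinv
      simp only [hinv] at hsum
      rw [← hsum]
      simp only [P, map_sum, map_mul, map_sub, π, u, G, hA]
    -- P = 0 by degree considerations
    have hGdeg : ∀ h : ℕ, (G h).natDegree ≤ t - 1 := by
      intro h
      have := Polynomial.natDegree_divByMonic g (monic_X_pow (h + 1))
      simp only [G, this, natDegree_X_pow, hgdeg]
      omega
    have hP0 : P = 0 := by
      by_contra hne
      have hdvd : g ∣ P := by
        rwa [Ideal.Quotient.eq_zero_iff_mem, Ideal.mem_span_singleton] at hπP
      have hle : g.natDegree ≤ P.natDegree := Polynomial.natDegree_le_of_dvd hdvd hne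
      have hPd : P.natDegree ≤ t - 1 := by
        refine Polynomial.natDegree_sum_le_of_forall_le _ _ fun i _ => ?_
        refine le_trans (natDegree_C_mul_le _ _) ?_
        refine le_trans (natDegree_sub_le _ _) (max_le ?_ ?_)
        · refine le_trans (natDegree_C_mul_le _ _) ?_
          exact Polynomial.natDegree_sum_le_of_forall_le _ _ fun h _ =>
            le_trans (natDegree_C_mul_le _ _) (hGdeg h)
        · exact Polynomial.natDegree_sum_le_of_forall_le _ _ fun j _ =>
            le_trans (natDegree_C_mul_le _ _) (hGdeg (hk j))
      omega
    -- rewrite P as a combination of the G h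
    let v : Fin (L + 1) → F := fun j => ∑ i, c i * u i j
    let w : ℕ → F := fun h =>
      (∑ i, c i * (-(g.eval (α i))⁻¹) * α i ^ h)
        - ∑ j ∈ Finset.univ.filter (fun j => hk j = h), v j
    have hPw : P = ∑ h ∈ Finset.range t, C (w h) * G h := by
      have hPA : (∑ i, C (c i) * (C (-(g.eval (α i))⁻¹) * hA i))
          = ∑ h ∈ Finset.range t, C (∑ i, c i * (-(g.eval (α i))⁻¹) * α i ^ h) * G h := by
        have h1 : ∀ i : Fin n, C (c i) * (C (-(g.eval (α i))⁻¹) * hA i)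
            = ∑ h ∈ Finset.range t, C (c i * (-(g.eval (α i))⁻¹) * α i ^ h) * G h := by
          intro i
          simp only [hA, Finset.mul_sum]
          refine Finset.sum_congr rfl fun h _ => ?_
          rw [C_mul, C_mul]
          ring
        rw [Finset.sum_congr rfl fun i _ => h1 i, Finset.sum_comm]
        refine Finset.sum_congr rfl fun h _ => ?_
        rw [← Finset.sum_mul, ← map_sum]
      have hPB : (∑ i, C (c i) * ∑ j, C (u i j) * G (hk j))
          = ∑ h ∈ Finset.range t, C (∑ j ∈ Finset.univ.filter (fun j => hk j = h), v j) * G h := by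
        have h1 : (∑ i, C (c i) * ∑ j, C (u i j) * G (hk j))
            = ∑ j, C (v j) * G (hk j) := by
          calc (∑ i, C (c i) * ∑ j, C (u i j) * G (hk j))
              = ∑ i, ∑ j, C (c i * u i j) * G (hk j) := by
                refine Finset.sum_congr rfl fun i _ => ?_
                rw [Finset.mul_sum]
                refine Finset.sum_congr rfl fun j _ => ?_
                rw [C_mul]; ring
            _ = ∑ j, ∑ i, C (c i * u i j) * G (hk j) := Finset.sum_comm
            _ = ∑ j, C (v j) * G (hk j) := by
                refine Finset.sum_congr rfl fun j _ => ?_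
                rw [← Finset.sum_mul, ← map_sum]
        rw [h1, ← Finset.sum_fiberwise_of_maps_to (g := fun j => hk j)
          (t := Finset.range t) (fun j _ => Finset.mem_range.2 (hhkt j))]
        refine Finset.sum_congr rfl fun h hh => ?_
        rw [map_sum, Finset.sum_mul]
        refine Finset.sum_congr rfl fun j hj => ?_
        rw [(Finset.mem_filter.1 hj).2]
      calc P = (∑ i, C (c i) * (C (-(g.eval (α i))⁻¹) * hA i))
            - ∑ i, C (c i) * ∑ j, C (u i j) * G (hk j) := by
            simp only [P, mul_sub, Finset.sum_sub_distrib]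
        _ = _ := by
            rw [hPA, hPB, ← Finset.sum_sub_distrib]
            refine Finset.sum_congr rfl fun h _ => ?_
            rw [← sub_mul, ← map_sub]
    have hw0 : ∀ h < t, w h = 0 := myTri g hgdeg hgt w (by rw [← hPw, hP0])
    -- conclude
    have hzero : (∑ h ∈ Finset.range t, g.coeff h * w h) = 0 := by
      refine Finset.sum_eq_zero fun h hh => ?_
      rw [hw0 h (Finset.mem_range.1 hh), mul_zero]
    have hA' : (∑ h ∈ Finset.range t, g.coeff h * (∑ i, c i * (-(g.eval (α i))⁻¹) * α i ^ h))
        = ∑ i, c i * (-(g.eval (α i))⁻¹) * (g.eval (α i) - g.coeff t * α i ^ t) := by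
      rw [show (∑ h ∈ Finset.range t, g.coeff h * (∑ i, c i * (-(g.eval (α i))⁻¹) * α i ^ h))
          = ∑ h ∈ Finset.range t, ∑ i, g.coeff h * (c i * (-(g.eval (α i))⁻¹) * α i ^ h) from
          Finset.sum_congr rfl fun h _ => Finset.mul_sum _ _ _, Finset.sum_comm]
      refine Finset.sum_congr rfl fun i _ => ?_
      have hev : g.eval (α i) = (∑ h ∈ Finset.range t, g.coeff h * α i ^ h)
          + g.coeff t * α i ^ t := by
        rw [eval_eq_sum_range, hgdeg, Finset.sum_range_succ]
      rw [show g.eval (α i) - g.coeff t * α i ^ t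
          = ∑ h ∈ Finset.range t, g.coeff h * α i ^ h by rw [hev]; ring]
      rw [Finset.mul_sum]
      refine Finset.sum_congr rfl fun h _ => ?_
      ring
    have hB' : (∑ h ∈ Finset.range t, g.coeff h *
          (∑ j ∈ Finset.univ.filter (fun j => hk j = h), v j))
        = ∑ i, c i * (g.coeff t * α i ^ t) * (g.eval (α i))⁻¹ := by
      have h1 : (∑ h ∈ Finset.range t, g.coeff h *
            (∑ j ∈ Finset.univ.filter (fun j => hk j = h), v j))
          = ∑ j, g.coeff (hk j) * v j := by
        rw [← Finset.sum_fiberwise_of_maps_to (g := fun j => hk j)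
          (t := Finset.range t) (fun j _ => Finset.mem_range.2 (hhkt j)) (fun j => g.coeff (hk j) * v j)]
        refine Finset.sum_congr rfl fun h _ => ?_
        rw [Finset.mul_sum]
        refine Finset.sum_congr rfl fun j hj => ?_
        rw [(Finset.mem_filter.1 hj).2]
      rw [h1]
      calc (∑ j, g.coeff (hk j) * v j)
          = ∑ j, ∑ i, g.coeff (hk j) * (c i * u i j) := by
            refine Finset.sum_congr rfl fun j _ => ?_
            rw [Finset.mul_sum]
        _ = ∑ i, ∑ j, g.coeff (hk j) * (c i * u i j) := Finset.sum_comm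
        _ = ∑ i, c i * (g.coeff t * α i ^ t) * (g.eval (α i))⁻¹ := by
            refine Finset.sum_congr rfl fun i _ => ?_
            have hstep : ∀ j, g.coeff (hk j) * (c i * u i j)
                = c i * (g.coeff (hk j) * η j * α i ^ (t - 1 + tw j)) * (g.eval (α i))⁻¹ := by
              intro j
              simp only [u, div_eq_mul_inv]
              ring
            rw [Finset.sum_congr rfl fun j _ => hstep j, ← Finset.sum_mul, ← Finset.mul_sum,
              hcond i]
    have hfin : (∑ h ∈ Finset.range t, g.coeff h * w h) = - ∑ i, c i := by
      calc (∑ h ∈ Finset.range t, g.coeff h * w h)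
          = (∑ h ∈ Finset.range t, g.coeff h * (∑ i, c i * (-(g.eval (α i))⁻¹) * α i ^ h))
            - ∑ h ∈ Finset.range t, g.coeff h *
              (∑ j ∈ Finset.univ.filter (fun j => hk j = h), v j) := by
            simp only [w, mul_sub, Finset.sum_sub_distrib]
        _ = ∑ i, (c i * (-(g.eval (α i))⁻¹) * (g.eval (α i) - g.coeff t * α i ^ t)
              - c i * (g.coeff t * α i ^ t) * (g.eval (α i))⁻¹) := by
            rw [hA', hB', Finset.sum_sub_distrib]
        _ = ∑ i, - c i := by
            refine Finset.sum_congr rfl fun i _ => ?_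
            have hei : g.eval (α i) ≠ 0 := hgα i
            have hstep : c i * (-(g.eval (α i))⁻¹) * (g.eval (α i) - g.coeff t * α i ^ t)
                - c i * (g.coeff t * α i ^ t) * (g.eval (α i))⁻¹
                = - (c i * ((g.eval (α i))⁻¹ * g.eval (α i))) := by ring
            rw [hstep, inv_mul_cancel₀ hei, mul_one]
        _ = - ∑ i, c i := by rw [Finset.sum_neg_distrib]
    have : - ∑ i, c i = 0 := by rw [← hfin, hzero]
    exact neg_eq_zero.1 this
  refine ⟨main, ?_⟩
  ext c
  exact ⟨fun h => h.1, fun h => ⟨h, main c h⟩⟩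
end

section
/- In the single-twist case ℓ = 1 with twist order t_1 = 1, hook 0 ≤ h < t and twist coefficient η ∈ 𝔽_{q^m}, assume g is monic (g_t = 1) and g_h·η ≠ 1. Then the expurgated twisted Goppa code equals the expurgated classical Goppa code: for every c = (c_1, …, c_n) ∈ 𝔽_q^n with Σ_{i=1}^n c_i = 0, c belongs to Γ(L, g, 1, h, η) if and only if c belongs to the classical Goppa code Γ(L, g) := {c ∈ 𝔽_q^n : Σ_{i=1}^n c_i (z − α_i)^{−1} = 0 in 𝔽_{q^m}[z]/⟨g(z)⟩}. -/
open Polynomial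

attribute [local instance] Classical.propDecidable

private lemma ringInverse_eq {R : Type*} [CommRing R] {a b : R} (hab : a * b = 1) :
    Ring.inverse a = b := by
  obtain ⟨u, rfl⟩ := IsUnit.of_mul_eq_one (a := a) b hab
  rw [Ring.inverse_unit]
  exact Units.inv_eq_of_mul_eq_one_right hab

private lemma sumCX_coeff {F : Type*} [Field F] (t : ℕ) (f : ℕ → F) (k : ℕ) :
    (∑ k' ∈ Finset.range t, C (f k') * X ^ k').coeff k = if k < t then f k else 0 := by
  rw [finset_sum_coeff]
  simp only [coeff_C_mul, coeff_X_pow, mul_ite, mul_one, mul_zero]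
  rw [Finset.sum_ite_eq (Finset.range t) k f]
  simp [Finset.mem_range]

private lemma core {F : Type*} [Field F] (g : F[X]) (t h : ℕ) (hht : h < t)
    (hdeg : g.natDegree = t) (hmon : g.Monic) (T : ℕ → F) (B : F)
    (H1 : ∀ k, k < t → ∑ j ∈ Finset.range (t - k), g.coeff (j + k + 1) * T j
        = B * g.coeff (k + h + 1))
    (H2 : ∑ m ∈ Finset.range (t + 1), g.coeff m * T m = 0) :
    (∀ m, m < t → T m = if m = h then B else 0) ∧ T t = -(g.coeff h * B) := by
  have hgt : g.coeff t = 1 := by rw [← hdeg]; exact hmon.coeff_natDegree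
  have hhi : ∀ k, t < k → g.coeff k = 0 := fun k hk =>
    coeff_eq_zero_of_natDegree_lt (by omega)
  have key : ∀ m, m < t → T m = if m = h then B else 0 := by
    intro m
    induction m using Nat.strong_induction_on with
    | _ m IH =>
      intro hm
      have h1 := H1 (t - 1 - m) (by omega)
      rw [show t - (t - 1 - m) = m + 1 by omega,
        show t - 1 - m + h + 1 = t - m + h by omega] at h1
      simp only [show ∀ j : ℕ, j + (t - 1 - m) + 1 = j + (t - m) from fun j => by omega] at h1
      rw [Finset.sum_range_succ, show m + (t - m) = t by omega, hgt, one_mul] at h1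
      have hrest : ∑ j ∈ Finset.range m, g.coeff (j + (t - m)) * T j
          = if h < m then g.coeff (h + (t - m)) * B else 0 := by
        rw [Finset.sum_congr rfl (fun j hj => by
          rw [IH j (Finset.mem_range.mp hj) (by have := Finset.mem_range.mp hj; omega)])]
        simp only [mul_ite, mul_zero]
        rw [Finset.sum_ite_eq' (Finset.range m) h (fun j => g.coeff (j + (t - m)) * B)]
        simp [Finset.mem_range]
      rw [hrest] at h1
      by_cases hmh : m = h
      · subst hmh
        rw [if_pos rfl]
        rw [if_neg (lt_irrefl m), show t - m + m = t by omega, hgt, mul_one] at h1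
        linear_combination h1
      · rw [if_neg hmh]
        rcases lt_or_gt_of_ne hmh with hlt | hgt'
        · rw [if_neg (by omega), hhi (t - m + h) (by omega), mul_zero] at h1
          linear_combination h1
        · rw [if_pos hgt', show h + (t - m) = t - m + h by ring] at h1
          linear_combination h1
  refine ⟨key, ?_⟩
  rw [Finset.sum_range_succ, hgt, one_mul] at H2
  have : ∑ m ∈ Finset.range t, g.coeff m * T m = g.coeff h * B := by
    rw [Finset.sum_congr rfl (fun m hm => by rw [key m (Finset.mem_range.mp hm)])]
    simp only [mul_ite, mul_zero]
    rw [Finset.sum_ite_eq' (Finset.range t) h (fun m => g.coeff m * B)]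
    simp [Finset.mem_range, hht]
  rw [this] at H2
  linear_combination H2

private lemma W_spec {F : Type*} [Field F] (g : F[X]) (t : ℕ) (ht : 1 ≤ t)
    (hdeg : g.natDegree = t) (hmon : g.Monic) (a : F) :
    (X - C a) * (∑ k ∈ Finset.range t,
        C (∑ j ∈ Finset.range (t - k), g.coeff (j + k + 1) * a ^ j) * X ^ k)
      = g - C (g.eval a) := by
  have hgt : g.coeff t = 1 := by rw [← hdeg]; exact hmon.coeff_natDegree
  have heval : g.eval a = ∑ i ∈ Finset.range (t + 1), g.coeff i * a ^ i := by
    rw [eval_eq_sum_range, hdeg]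
  set W : F[X] := ∑ k ∈ Finset.range t,
      C (∑ j ∈ Finset.range (t - k), g.coeff (j + k + 1) * a ^ j) * X ^ k with hW
  have hWc : ∀ k, W.coeff k
      = if k < t then ∑ j ∈ Finset.range (t - k), g.coeff (j + k + 1) * a ^ j else 0 :=
    fun k => sumCX_coeff t _ k
  ext n
  rw [sub_mul, coeff_sub, coeff_sub, coeff_C]
  cases n with
  | zero =>
    rw [mul_coeff_zero, coeff_X_zero, zero_mul, coeff_C_mul, hWc 0,
      if_pos (show (0:ℕ) < t by omega), if_pos rfl, heval, Finset.sum_range_succ']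
    have e2 : a * ∑ j ∈ Finset.range t, g.coeff (j + 0 + 1) * a ^ j
        = ∑ j ∈ Finset.range t, g.coeff (j + 1) * a ^ (j + 1) := by
      rw [Finset.mul_sum]
      exact Finset.sum_congr rfl fun j _ => by rw [show j + 0 + 1 = j + 1 by omega]; ring
    rw [show t - 0 = t by omega, e2]
    simp only [pow_zero, mul_one]
    ring
  | succ k =>
    rw [coeff_X_mul, coeff_C_mul, hWc k, hWc (k + 1),
      if_neg (show ¬ (k + 1 = 0) by omega), sub_zero]
    rcases lt_trichotomy (k + 1) t with hlt | heq | hgt'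
    · rw [if_pos (show k < t by omega), if_pos hlt]
      have e1 : ∑ j ∈ Finset.range (t - k), g.coeff (j + k + 1) * a ^ j
          = (∑ j ∈ Finset.range (t - (k + 1)), g.coeff (j + (k + 1) + 1) * a ^ (j + 1))
            + g.coeff (k + 1) := by
        rw [show t - k = (t - (k + 1)) + 1 by omega, Finset.sum_range_succ']
        simp only [pow_zero, mul_one, zero_add]
        congr 1
        exact Finset.sum_congr rfl fun j _ => by rw [show j + 1 + k + 1 = j + (k + 1) + 1 by omega]
      have e2 : a * ∑ j ∈ Finset.range (t - (k + 1)), g.coeff (j + (k + 1) + 1) * a ^ j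
          = ∑ j ∈ Finset.range (t - (k + 1)), g.coeff (j + (k + 1) + 1) * a ^ (j + 1) := by
        rw [Finset.mul_sum]
        exact Finset.sum_congr rfl fun j _ => by ring
      rw [e1, e2]
      ring
    · rw [if_pos (show k < t by omega), if_neg (show ¬ (k + 1 < t) by omega), mul_zero,
        sub_zero, show t - k = 1 by omega, Finset.sum_range_one]
      simp [show 0 + k + 1 = k + 1 by omega]
    · rw [if_neg (show ¬ (k < t) by omega), if_neg (show ¬ (k + 1 < t) by omega), mul_zero,
        sub_zero, coeff_eq_zero_of_natDegree_lt (show g.natDegree < k + 1 by omega)]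

/-- The classical Goppa code `Γ(L, g)`: all `c ∈ 𝔽_q^n` with
`Σ_i c_i (z - α_i)⁻¹ = 0` in `F[z]/⟨g⟩`. -/
noncomputable def ClassicalGoppa {F : Type*} [Field F] (K : Subfield F) {n : ℕ}
    (α : Fin n → F) (g : F[X]) : Set (Fin n → F) :=
  {c | (∀ i, c i ∈ K) ∧
    ∑ i, (Ideal.Quotient.mk (Ideal.span {g})) (C (c i)) *
      Ring.inverse ((Ideal.Quotient.mk (Ideal.span {g})) (X - C (α i))) = 0}

/-- in the single-twist case `ℓ = 1`, `t_1 = 1`, hook `h < t`, with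
`g` monic and `g_h · η ≠ 1`, the expurgated twisted Goppa code equals the
expurgated classical Goppa code: for every `c ∈ 𝔽_q^n` with `Σ_i c_i = 0`,
`c ∈ Γ(L, g, 1, h, η)` iff `c ∈ Γ(L, g)`. -/
theorem stmt3 {F : Type*} [Field F] [Fintype F] (K : Subfield F)
    {n : ℕ} (α : Fin n → F) (hα : Function.Injective α)
    (g : F[X]) (t : ℕ) (ht : 1 ≤ t) (hgdeg : g.natDegree = t)
    (hgmonic : g.Monic) (hgα : ∀ i, g.eval (α i) ≠ 0)
    (h : ℕ) (hht : h < t) (η : F)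
    (hgh : g.coeff h * η ≠ 1)
    (c : Fin n → F) (hc : ∀ i, c i ∈ K) (hsum : ∑ i, c i = 0) :
    c ∈ MTGoppa K α g t (fun _ : Fin 1 => 1) (fun _ : Fin 1 => h) (fun _ : Fin 1 => η) ↔
      c ∈ ClassicalGoppa K α g := by
  classical
  set mk : F[X] →+* F[X] ⧸ Ideal.span {g} := (Ideal.Quotient.mk (Ideal.span {g})) with hmkdef
  set d : Fin n → F := fun i => c i / g.eval (α i) with hd
  set W : F → F[X] := fun a => ∑ k ∈ Finset.range t,
      C (∑ j ∈ Finset.range (t - k), g.coeff (j + k + 1) * a ^ j) * X ^ k with hWdef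
  set T : ℕ → F := fun m => ∑ i, d i * α i ^ m with hTdef
  set gq : F[X] := g /ₘ X ^ (h + 1) with hgqdef
  have hmkg : mk g = 0 := by
    rw [hmkdef, Ideal.Quotient.eq_zero_iff_mem]
    exact Ideal.subset_span rfl
  -- inverse of (X - C a) in the quotient
  have hinv : ∀ i, Ring.inverse (mk (X - C (α i)))
      = mk (C (-(g.eval (α i))⁻¹) * W (α i)) := by
    intro i
    apply ringInverse_eq
    rw [← map_mul]
    have hprod : (X - C (α i)) * (C (-(g.eval (α i))⁻¹) * W (α i))
        = C (-(g.eval (α i))⁻¹) * g + 1 := by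
      rw [mul_left_comm, hWdef]
      rw [W_spec g t ht hgdeg hgmonic (α i)]
      rw [mul_sub, ← C_mul]
      rw [show -(g.eval (α i))⁻¹ * g.eval (α i) = -1 by
        rw [neg_mul, inv_mul_cancel₀ (hgα i)]]
      simp
    rw [hprod, map_add, map_mul, hmkg, mul_zero, map_one, zero_add]
  -- coefficients of gq
  have hgqc : ∀ k, gq.coeff k = g.coeff (k + h + 1) := by
    intro k
    have hXm : (X ^ (h + 1) : F[X]).Monic := monic_X_pow _
    conv_rhs => rw [← modByMonic_add_div g (X ^ (h + 1))]
    rw [coeff_add, show k + h + 1 = k + (h + 1) by omega, coeff_X_pow_mul]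
    have hdeg' : (g %ₘ X ^ (h + 1)).degree < ((h + 1 : ℕ) : WithBot ℕ) := by
      have := degree_modByMonic_lt g hXm
      rwa [degree_X_pow] at this
    rw [coeff_eq_zero_of_degree_lt (lt_of_lt_of_le hdeg' (by exact_mod_cast by omega)),
      zero_add]
  -- the two key polynomials
  set Qcl : F[X] := ∑ i, C (d i) * W (α i) with hQcl
  set Qtw : F[X] := Qcl + C (η * T t) * gq with hQtw
  have hWc : ∀ a k, (W a).coeff k
      = if k < t then ∑ j ∈ Finset.range (t - k), g.coeff (j + k + 1) * a ^ j else 0 :=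
    fun a k => sumCX_coeff t _ k
  have hQclc : ∀ k, Qcl.coeff k
      = ∑ j ∈ Finset.range (t - k), g.coeff (j + k + 1) * T j := by
    intro k
    rw [hQcl, finset_sum_coeff]
    simp only [coeff_C_mul, hWc]
    by_cases hk : k < t
    · simp only [if_pos hk]
      simp_rw [Finset.mul_sum]
      rw [Finset.sum_comm]
      refine Finset.sum_congr rfl fun j _ => ?_
      rw [hTdef, Finset.mul_sum]
      exact Finset.sum_congr rfl fun i _ => by ring
    · simp only [if_neg hk]
      rw [show t - k = 0 by omega]
      simp
  have hQtwc : ∀ k, Qtw.coeff k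
      = (∑ j ∈ Finset.range (t - k), g.coeff (j + k + 1) * T j)
        + η * T t * g.coeff (k + h + 1) := by
    intro k
    rw [hQtw, coeff_add, hQclc, coeff_C_mul, hgqc]
  -- high coefficients vanish
  have hgdegree : g.degree = (t : WithBot ℕ) := by
    rw [degree_eq_natDegree hgmonic.ne_zero, hgdeg]
  have hhi : ∀ k, t < k → g.coeff k = 0 := fun k hk =>
    coeff_eq_zero_of_natDegree_lt (by omega)
  have hmkzero : ∀ Q : F[X], (∀ m, t ≤ m → Q.coeff m = 0) → (mk Q = 0 ↔ Q = 0) := by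
    intro Q hQ
    constructor
    · intro hQ0
      rw [hmkdef, Ideal.Quotient.eq_zero_iff_mem, Ideal.mem_span_singleton] at hQ0
      refine eq_zero_of_dvd_of_degree_lt hQ0 ?_
      rw [hgdegree]
      exact (degree_lt_iff_coeff_zero Q t).mpr fun m hm => hQ m hm
    · intro hQ0; rw [hQ0, map_zero]
  have hQclhi : ∀ m, t ≤ m → Qcl.coeff m = 0 := by
    intro m hm; rw [hQclc, show t - m = 0 by omega]; simp
  have hQtwhi : ∀ m, t ≤ m → Qtw.coeff m = 0 := by
    intro m hm
    rw [hQtwc, show t - m = 0 by omega, hhi (m + h + 1) (by omega)]; simp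
  have hU0 : ∑ m ∈ Finset.range (t + 1), g.coeff m * T m = 0 := by
    calc ∑ m ∈ Finset.range (t + 1), g.coeff m * T m
        = ∑ m ∈ Finset.range (t + 1), ∑ i, g.coeff m * (d i * α i ^ m) := by
          refine Finset.sum_congr rfl fun m _ => ?_
          rw [hTdef]; simp only; rw [Finset.mul_sum]
      _ = ∑ i, ∑ m ∈ Finset.range (t + 1), g.coeff m * (d i * α i ^ m) := Finset.sum_comm
      _ = ∑ i, d i * g.eval (α i) := by
          refine Finset.sum_congr rfl fun i _ => ?_
          rw [eval_eq_sum_range, hgdeg, Finset.mul_sum]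
          exact Finset.sum_congr rfl fun m _ => by ring
      _ = ∑ i, c i := Finset.sum_congr rfl fun i _ => by
          rw [hd]; simp only; rw [div_mul_cancel₀ _ (hgα i)]
      _ = 0 := hsum
  -- reformulate the twisted membership
  have hMT : c ∈ MTGoppa K α g t (fun _ : Fin 1 => 1) (fun _ : Fin 1 => h)
      (fun _ : Fin 1 => η) ↔ mk Qtw = 0 := by
    simp only [MTGoppa, Set.mem_setOf_eq, and_iff_right hc]
    rw [show (∑ i, (Ideal.Quotient.mk (Ideal.span {g})) (C (c i)) *
        (Ring.inverse ((Ideal.Quotient.mk (Ideal.span {g})) (X - C (α i))) -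
          (Ideal.Quotient.mk (Ideal.span {g}))
            (∑ j : Fin 1, C ((fun _ : Fin 1 => η) j * α i ^ (t - 1 + (fun _ : Fin 1 => 1) j)
                / g.eval (α i)) * (g /ₘ X ^ ((fun _ : Fin 1 => h) j + 1)))))
        = - mk Qtw from ?_, neg_eq_zero]
    have hterm : ∀ i, mk (C (c i)) *
        (Ring.inverse (mk (X - C (α i))) -
          mk (C (η * α i ^ t / g.eval (α i)) * gq))
        = mk (-(C (d i) * W (α i) + C (η * (d i * α i ^ t)) * gq)) := by
      intro i
      rw [hinv i, ← map_sub, ← map_mul]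
      congr 1
      rw [mul_sub, ← mul_assoc, ← mul_assoc, ← C_mul, ← C_mul,
        show c i * -(g.eval (α i))⁻¹ = -(d i) from by
          rw [hd]; simp only; rw [div_eq_mul_inv]; ring,
        show c i * (η * α i ^ t / g.eval (α i)) = η * (d i * α i ^ t) from by
          rw [hd]; simp only; rw [div_eq_mul_inv, div_eq_mul_inv]; ring]
      rw [map_neg]; ring
    calc (∑ i, (Ideal.Quotient.mk (Ideal.span {g})) (C (c i)) *
        (Ring.inverse ((Ideal.Quotient.mk (Ideal.span {g})) (X - C (α i))) -
          (Ideal.Quotient.mk (Ideal.span {g}))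
            (∑ j : Fin 1, C ((fun _ : Fin 1 => η) j * α i ^ (t - 1 + (fun _ : Fin 1 => 1) j)
                / g.eval (α i)) * (g /ₘ X ^ ((fun _ : Fin 1 => h) j + 1)))))
        = ∑ i, mk (C (c i)) *
            (Ring.inverse (mk (X - C (α i))) -
              mk (C (η * α i ^ t / g.eval (α i)) * gq)) := by
          refine Finset.sum_congr rfl fun i _ => ?_
          rw [Fin.sum_univ_one]
          simp only [← hmkdef, ← hgqdef]
          rw [show t - 1 + 1 = t by omega]
      _ = ∑ i, mk (-(C (d i) * W (α i) + C (η * (d i * α i ^ t)) * gq)) :=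
          Finset.sum_congr rfl fun i _ => hterm i
      _ = - mk Qtw := by
          rw [← map_sum]
          have : (∑ i, -(C (d i) * W (α i) + C (η * (d i * α i ^ t)) * gq)) = - Qtw := by
            rw [Finset.sum_neg_distrib]
            congr 1
            rw [Finset.sum_add_distrib, hQtw, hQcl]
            congr 1
            rw [← Finset.sum_mul, ← map_sum]
            congr 2
            rw [hTdef]; simp only; rw [Finset.mul_sum]
          rw [this, map_neg]
  -- reformulate the classical membership
  have hCL : c ∈ ClassicalGoppa K α g ↔ mk Qcl = 0 := by
    simp only [ClassicalGoppa, Set.mem_setOf_eq, and_iff_right hc]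
    rw [show (∑ i, (Ideal.Quotient.mk (Ideal.span {g})) (C (c i)) *
        Ring.inverse ((Ideal.Quotient.mk (Ideal.span {g})) (X - C (α i))))
        = - mk Qcl from ?_, neg_eq_zero]
    calc (∑ i, (Ideal.Quotient.mk (Ideal.span {g})) (C (c i)) *
        Ring.inverse ((Ideal.Quotient.mk (Ideal.span {g})) (X - C (α i))))
        = ∑ i, mk (-(C (d i) * W (α i))) := by
          refine Finset.sum_congr rfl fun i _ => ?_
          simp only [← hmkdef]
          rw [hinv i, ← map_mul]
          congr 1
          rw [← mul_assoc, ← C_mul,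
            show c i * -(g.eval (α i))⁻¹ = -(d i) from by
              rw [hd]; simp only; rw [div_eq_mul_inv]; ring]
          rw [map_neg]; ring
      _ = - mk Qcl := by
          rw [← map_sum, Finset.sum_neg_distrib, ← hQcl, map_neg]
  rw [hMT, hCL, hmkzero Qtw hQtwhi, hmkzero Qcl hQclhi]
  constructor
  · intro h0
    have H1 : ∀ k, k < t → ∑ j ∈ Finset.range (t - k), g.coeff (j + k + 1) * T j
        = (-(η * T t)) * g.coeff (k + h + 1) := by
      intro k hk
      have hck := hQtwc k
      rw [h0, coeff_zero] at hck
      linear_combination -hck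
    obtain ⟨-, hTt⟩ := core g t h hht hgdeg hgmonic T (-(η * T t)) H1 hU0
    have hTt0 : T t = 0 := by
      have hfac : T t * (1 - g.coeff h * η) = 0 := by linear_combination hTt
      rcases mul_eq_zero.mp hfac with h' | h'
      · exact h'
      · exact absurd (by linear_combination -h' : g.coeff h * η = 1) hgh
    rw [hQtw, hTt0, mul_zero, map_zero, zero_mul, add_zero] at h0
    exact h0
  · intro h0
    have H1 : ∀ k, k < t → ∑ j ∈ Finset.range (t - k), g.coeff (j + k + 1) * T j
        = (0 : F) * g.coeff (k + h + 1) := by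
      intro k hk
      have hck := hQclc k
      rw [h0, coeff_zero] at hck
      rw [zero_mul, ← hck]
    obtain ⟨-, hTt⟩ := core g t h hht hgdeg hgmonic T 0 H1 hU0
    rw [mul_zero, neg_zero] at hTt
    rw [hQtw, h0, hTt, mul_zero, map_zero, zero_mul, add_zero]
end

section
/- With the error vector e of Hamming weight |J| ≤ t/2 and the polynomials σ(x), τ(x), s_π(x) ∈ 𝔽_{q^m}[x] as defined, the following hold: (i) s_π(x)·σ(x) ≡ τ(x) (mod x^t); (ii) gcd(σ(x), τ(x)) = 1; (iii) deg τ(x) ≤ deg σ(x) = |J| ≤ t/2. -/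
open Polynomial

attribute [local instance] Classical.propDecidable

variable {F : Type*} [Field F] {n : ℕ}

/-- The support `J` of an error vector `e`. -/
noncomputable def errSupp (e : Fin n → F) : Finset (Fin n) :=
  Finset.univ.filter fun i => e i ≠ 0

/-- The error-locator polynomial `σ(x) = Π_{i∈J} (x - α_i⁻¹)`. -/
noncomputable def errLoc (α e : Fin n → F) : F[X] :=
  ∏ i ∈ errSupp e, (X - C (α i)⁻¹)

/-- The scalar `A = η Σ_{i∈J} α_i^{t-1+t₁} g(α_i)⁻¹ e_i`. -/
noncomputable def twistScalar (α : Fin n → F) (g : F[X]) (t t₁ : ℕ) (η : F)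
    (e : Fin n → F) : F :=
  η * ∑ i ∈ errSupp e, α i ^ (t - 1 + t₁) * (g.eval (α i))⁻¹ * e i

/-- The error-evaluator polynomial
`τ(x) = A·σ(x) - Σ_{i∈J} α_i⁻¹ g(α_i)⁻¹ e_i Π_{j∈J∖{i}} (x - α_j⁻¹)`. -/
noncomputable def errEval (α : Fin n → F) (g : F[X]) (t t₁ : ℕ) (η : F)
    (e : Fin n → F) : F[X] :=
  C (twistScalar α g t t₁ η e) * errLoc α e -
    ∑ i ∈ errSupp e, C ((α i)⁻¹ * (g.eval (α i))⁻¹ * e i) *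
      ∏ j ∈ (errSupp e).erase i, (X - C (α j)⁻¹)

/-- The transformed syndrome polynomial
`s_π(x) = A + Σ_{i∈J} g(α_i)⁻¹ e_i Σ_{l=0}^{t-1} α_i^l x^l`. -/
noncomputable def synPoly (α : Fin n → F) (g : F[X]) (t t₁ : ℕ) (η : F)
    (e : Fin n → F) : F[X] :=
  C (twistScalar α g t t₁ η e) +
    ∑ i ∈ errSupp e, C ((g.eval (α i))⁻¹ * e i) *
      ∑ l ∈ Finset.range t, C (α i ^ l) * X ^ l

/-- Geometric telescoping identity. -/
lemma geo {F : Type*} [Field F] (a : F) (ha : a ≠ 0) (t : ℕ) :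
    (X - C a⁻¹) * ∑ l ∈ Finset.range t, C (a ^ l) * X ^ l
      = C (a ^ t * a⁻¹) * X ^ t - C a⁻¹ := by
  induction t with
  | zero => simp
  | succ t ih =>
    rw [Finset.sum_range_succ, mul_add, ih]
    have h1 : a ^ (t + 1) * a⁻¹ = a ^ t := by
      field_simp [pow_succ]
      ring
    rw [h1]
    simp only [C_mul, pow_succ]
    ring

/-- with `|J| ≤ t/2`, one has (i) `s_π σ ≡ τ (mod x^t)`;
(ii) `gcd(σ, τ) = 1`; (iii) `deg τ ≤ deg σ = |J| ≤ t/2`. -/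
theorem stmt4 [Fintype F] (K : Subfield F) (α : Fin n → F)
    (hα : Function.Injective α) (hα0 : ∀ i, α i ≠ 0)
    (g : F[X]) (t : ℕ) (ht : 1 ≤ t) (hgdeg : g.natDegree = t)
    (hgα : ∀ i, g.eval (α i) ≠ 0) (t₁ : ℕ) (ht₁ : 1 ≤ t₁) (η : F)
    (e : Fin n → F) (heK : ∀ i, e i ∈ K)
    (hw : 2 * (errSupp e).card ≤ t) :
    (X ^ t : F[X]) ∣ synPoly α g t t₁ η e * errLoc α e - errEval α g t t₁ η e ∧
    IsCoprime (errLoc α e) (errEval α g t t₁ η e) ∧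
    (errEval α g t t₁ η e).natDegree ≤ (errLoc α e).natDegree ∧
    (errLoc α e).natDegree = (errSupp e).card ∧
    2 * (errSupp e).card ≤ t := by
  classical
  have he : ∀ i ∈ errSupp e, e i ≠ 0 := by
    intro i hi; exact (Finset.mem_filter.mp hi).2
  have hinv : ∀ i ∈ errSupp e, ∀ j ∈ errSupp e, i ≠ j → (α i)⁻¹ ≠ (α j)⁻¹ := by
    intro i _ j _ hij h
    exact hij (hα (by rw [← inv_inv (α i), h, inv_inv]))
  -- degree of the locator
  have hdeg_loc : (errLoc α e).natDegree = (errSupp e).card := by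
    unfold errLoc
    rw [natDegree_prod_of_monic _ _ (fun i _ => monic_X_sub_C _)]
    simp [natDegree_X_sub_C]
  have hdegP : ∀ i : Fin n,
      (∏ j ∈ (errSupp e).erase i, (X - C (α j)⁻¹)).natDegree
        = ((errSupp e).erase i).card := by
    intro i
    rw [natDegree_prod_of_monic _ _ (fun j _ => monic_X_sub_C _)]
    simp [natDegree_X_sub_C]
  -- key divisibility identity
  have key : synPoly α g t t₁ η e * errLoc α e - errEval α g t t₁ η e
      = X ^ t * ∑ i ∈ errSupp e,
          C ((g.eval (α i))⁻¹ * e i * (α i ^ t * (α i)⁻¹)) *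
            ∏ j ∈ (errSupp e).erase i, (X - C (α j)⁻¹) := by
    unfold synPoly errEval
    have hterm : ∀ i ∈ errSupp e,
        C ((g.eval (α i))⁻¹ * e i) *
            (∑ l ∈ Finset.range t, C (α i ^ l) * X ^ l) * errLoc α e
          = X ^ t * (C ((g.eval (α i))⁻¹ * e i * (α i ^ t * (α i)⁻¹)) *
              ∏ j ∈ (errSupp e).erase i, (X - C (α j)⁻¹)) -
            C ((α i)⁻¹ * (g.eval (α i))⁻¹ * e i) *
              ∏ j ∈ (errSupp e).erase i, (X - C (α j)⁻¹) := by
      intro i hi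
      have hσ : errLoc α e = (X - C (α i)⁻¹) *
          ∏ j ∈ (errSupp e).erase i, (X - C (α j)⁻¹) := by
        unfold errLoc
        exact (Finset.mul_prod_erase _ _ hi).symm
      rw [hσ]
      have hg := geo (α i) (hα0 i) t
      simp only [C_mul] at hg ⊢
      linear_combination (C ((g.eval (α i))⁻¹) * C (e i) *
        ∏ j ∈ (errSupp e).erase i, (X - C (α j)⁻¹)) * hg
    rw [add_mul, Finset.sum_mul]
    rw [Finset.sum_congr rfl hterm, Finset.sum_sub_distrib, ← Finset.mul_sum]
    ring
  refine ⟨⟨_, key⟩, ?_, ?_, hdeg_loc, hw⟩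
  · -- coprimality
    have heval : ∀ i ∈ errSupp e, (errEval α g t t₁ η e).eval ((α i)⁻¹) ≠ 0 := by
      intro i hi
      unfold errEval errLoc
      have hσ : (∏ j ∈ errSupp e, (X - C (α j)⁻¹)).eval (α i)⁻¹ = 0 := by
        rw [eval_prod]
        exact Finset.prod_eq_zero hi (by simp)
      rw [eval_sub, eval_mul, hσ, mul_zero, zero_sub, neg_ne_zero, eval_finset_sum]
      rw [Finset.sum_eq_single i]
      · simp only [eval_mul, eval_C, eval_prod, eval_sub, eval_X]
        apply mul_ne_zero
        · exact mul_ne_zero (mul_ne_zero (inv_ne_zero (hα0 i))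
            (inv_ne_zero (hgα i))) (he i hi)
        · rw [Finset.prod_ne_zero_iff]
          intro j hj
          rw [sub_ne_zero]
          exact hinv i hi j (Finset.mem_of_mem_erase hj)
            (Ne.symm (Finset.ne_of_mem_erase hj))
      · intro k hk hki
        simp only [eval_mul, eval_prod, eval_sub, eval_X, eval_C]
        apply mul_eq_zero_of_right
        exact Finset.prod_eq_zero (Finset.mem_erase.mpr ⟨Ne.symm hki, hi⟩) (by simp)
      · intro h; exact absurd hi h
    unfold errLoc
    apply IsCoprime.prod_left
    intro i hi
    rw [(irreducible_X_sub_C ((α i)⁻¹)).coprime_iff_not_dvd, dvd_iff_isRoot]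
    exact heval i hi
  · -- degree bound for the evaluator
    rw [hdeg_loc]
    unfold errEval
    refine le_trans (natDegree_sub_le _ _) (max_le ?_ ?_)
    · exact le_trans (natDegree_C_mul_le _ _) (le_of_eq hdeg_loc)
    · refine natDegree_sum_le_of_forall_le _ _ (fun i hi => ?_)
      refine le_trans (natDegree_C_mul_le _ _) ?_
      rw [hdegP i]
      exact le_trans (Finset.card_le_card (Finset.erase_subset _ _)) le_rfl
end

section
/- With the error vector e of Hamming weight |J| ≤ t/2 and the polynomials σ(x) and τ(x) as defined, for every i ∈ J one has τ(α_i^{−1}) = −g(α_i)^{−1} e_i α_i^{−1} σ′(α_i^{−1}), where σ′ denotes the formal derivative of σ; equivalently, since σ′(α_i^{−1}) ≠ 0, the error magnitude is recovered as e_i = −α_i g(α_i) τ(α_i^{−1}) / σ′(α_i^{−1}). -/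
open Polynomial

attribute [local instance] Classical.propDecidable

variable {F : Type*} [Field F] {n : ℕ}

/-- for every `i ∈ J`,
`τ(α_i⁻¹) = -g(α_i)⁻¹ e_i α_i⁻¹ σ'(α_i⁻¹)`; moreover `σ'(α_i⁻¹) ≠ 0`, so that
the error magnitude is recovered as `e_i = -α_i g(α_i) τ(α_i⁻¹) / σ'(α_i⁻¹)`. -/
theorem stmt5 [Fintype F] (K : Subfield F) (α : Fin n → F)
    (hα : Function.Injective α) (hα0 : ∀ i, α i ≠ 0)
    (g : F[X]) (t : ℕ) (ht : 1 ≤ t) (hgdeg : g.natDegree = t)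
    (hgα : ∀ i, g.eval (α i) ≠ 0) (t₁ : ℕ) (ht₁ : 1 ≤ t₁) (η : F)
    (e : Fin n → F) (heK : ∀ i, e i ∈ K)
    (hw : 2 * (errSupp e).card ≤ t) :
    ∀ i ∈ errSupp e,
      (errEval α g t t₁ η e).eval ((α i)⁻¹) =
        -((g.eval (α i))⁻¹ * e i * (α i)⁻¹ *
          (Polynomial.derivative (errLoc α e)).eval ((α i)⁻¹)) ∧
      (Polynomial.derivative (errLoc α e)).eval ((α i)⁻¹) ≠ 0 ∧
      e i = -(α i * g.eval (α i) * (errEval α g t t₁ η e).eval ((α i)⁻¹) /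
        (Polynomial.derivative (errLoc α e)).eval ((α i)⁻¹)) := by
  intro i hi
  have hinj : ∀ j ∈ (errSupp e).erase i, (α i)⁻¹ - (α j)⁻¹ ≠ 0 := by
    intro j hj
    have hji : j ≠ i := (Finset.mem_erase.mp hj).1
    rw [sub_ne_zero]
    intro h
    exact hji (hα (inv_injective h)).symm
  -- derivative evaluation
  have hD : (Polynomial.derivative (errLoc α e)).eval ((α i)⁻¹) =
      ∏ j ∈ (errSupp e).erase i, ((α i)⁻¹ - (α j)⁻¹) := by
    unfold errLoc
    rw [← Finset.mul_prod_erase _ _ hi, derivative_mul]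
    simp [Polynomial.eval_prod]
  have hDne : (Polynomial.derivative (errLoc α e)).eval ((α i)⁻¹) ≠ 0 := by
    rw [hD]
    exact Finset.prod_ne_zero_iff.mpr hinj
  have hσ : (errLoc α e).eval ((α i)⁻¹) = 0 := by
    unfold errLoc
    rw [Polynomial.eval_prod]
    exact Finset.prod_eq_zero hi (by simp)
  have hτ : (errEval α g t t₁ η e).eval ((α i)⁻¹) =
      -((g.eval (α i))⁻¹ * e i * (α i)⁻¹ *
        (Polynomial.derivative (errLoc α e)).eval ((α i)⁻¹)) := by
    unfold errEval
    rw [Polynomial.eval_sub, Polynomial.eval_mul, hσ, mul_zero, zero_sub,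
      Polynomial.eval_finset_sum, Finset.sum_eq_single i]
    · rw [hD]; simp only [Polynomial.eval_mul, Polynomial.eval_C, Polynomial.eval_prod]
      simp only [Polynomial.eval_sub, Polynomial.eval_X, Polynomial.eval_C]
      ring
    · intro k hk hki
      have hik : i ∈ (errSupp e).erase k := Finset.mem_erase.mpr ⟨Ne.symm hki, hi⟩
      simp only [Polynomial.eval_mul, Polynomial.eval_prod]
      rw [Finset.prod_eq_zero hik (by simp), mul_zero]
    · intro h; exact absurd hi h
  refine ⟨hτ, hDne, ?_⟩
  rw [hτ]
  have hg := hgα i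
  have hαi := hα0 i
  set D := eval (α i)⁻¹ (derivative (errLoc α e)) with hDdef
  have h1 : α i * eval (α i) g * ((eval (α i) g)⁻¹ * e i * (α i)⁻¹ * D) = e i * D := by
    rw [show α i * eval (α i) g * ((eval (α i) g)⁻¹ * e i * (α i)⁻¹ * D) =
        e i * D * (α i * (α i)⁻¹) * (eval (α i) g * (eval (α i) g)⁻¹) from by ring,
      mul_inv_cancel₀ hαi, mul_inv_cancel₀ hg, mul_one, mul_one]
  rw [mul_neg, neg_div, neg_neg, h1, mul_div_cancel_right₀ _ hDne]
end

section
/- Let σ̂(x), τ̂(x) ∈ 𝔽_{q^m}[x] with σ̂ monic, satisfying s_π(x)·σ̂(x) ≡ τ̂(x) (mod x^t), gcd(σ̂(x), τ̂(x)) = 1, and deg τ̂(x) ≤ deg σ̂(x) ≤ t/2. Then σ̂(x) = σ(x) and τ̂(x) = τ(x) (the error-locator and error-evaluator polynomials of e) if and only if the following three conditions hold: (a) J = {i : 1 ≤ i ≤ n, σ̂(α_i^{−1}) = 0} and |J| = deg σ̂(x); (b) e_i = −α_i g(α_i) τ̂(α_i^{−1}) / σ̂′(α_i^{−1}) for every i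 ∈ J, and e_i = 0 for i ∉ J; (c) τ̂(x) = A·σ̂(x) + w(x) for some w(x) ∈ 𝔽_{q^m}[x] with deg w(x) < deg σ̂(x), where A := η Σ_{i∈J} α_i^{t−1+t_1} g(α_i)^{−1} e_i. -/
open Polynomial

attribute [local instance] Classical.propDecidable

variable {F : Type*} [Field F] {n : ℕ}

lemma aux_deriv_eval (s : Finset (Fin n)) (r : Fin n → F) {i : Fin n} (hi : i ∈ s) :
    (derivative (∏ j ∈ s, (X - C (r j)))).eval (r i) = ∏ j ∈ s.erase i, (r i - r j) := by
  rw [← Finset.mul_prod_erase s _ hi, derivative_mul, derivative_X_sub_C, one_mul]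
  simp [eval_prod]

lemma aux_prod_eval_ne_zero (s : Finset (Fin n)) {r : Fin n → F} (hr : Function.Injective r) {i : Fin n} :
    ∏ j ∈ s.erase i, (r i - r j) ≠ 0 := by
  rw [Finset.prod_ne_zero_iff]
  intro j hj
  exact sub_ne_zero_of_ne fun h => (Finset.mem_erase.mp hj).1 (hr h.symm)

lemma aux_loc_monic (s : Finset (Fin n)) (r : Fin n → F) : (∏ j ∈ s, (X - C (r j))).Monic :=
  monic_prod_of_monic _ _ fun _ _ => monic_X_sub_C _

lemma aux_loc_natDegree (s : Finset (Fin n)) (r : Fin n → F) :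
    (∏ j ∈ s, (X - C (r j))).natDegree = s.card := by
  rw [natDegree_prod _ _ fun j _ => X_sub_C_ne_zero (r j)]
  simp

lemma aux_loc_eval_eq_zero_iff (s : Finset (Fin n)) {r : Fin n → F} (hr : Function.Injective r) (i : Fin n) :
    (∏ j ∈ s, (X - C (r j))).eval (r i) = 0 ↔ i ∈ s := by
  simp only [eval_prod, eval_sub, eval_X, eval_C, Finset.prod_eq_zero_iff, sub_eq_zero]
  constructor
  · rintro ⟨j, hj, hij⟩; rwa [hr hij] at *
  · exact fun h => ⟨i, h, rfl⟩

lemma aux_loc_dvd (s : Finset (Fin n)) {r : Fin n → F} (hr : Function.Injective r) (p : F[X])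
    (hroot : ∀ i ∈ s, p.eval (r i) = 0) : ∏ j ∈ s, (X - C (r j)) ∣ p :=
  Finset.prod_dvd_of_coprime
    (fun i _ j _ hij => pairwise_coprime_X_sub_C hr hij)
    (fun i hi => dvd_iff_isRoot.mpr (hroot i hi))


/-- characterization of the error-locator / error-evaluator pair.
Let `σ̂, τ̂` with `σ̂` monic satisfy `s_π σ̂ ≡ τ̂ (mod x^t)`, `gcd(σ̂, τ̂) = 1` and
`deg τ̂ ≤ deg σ̂ ≤ t/2`.  Then `(σ̂, τ̂) = (σ, τ)` iff (a) `J` is the zero set of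
`σ̂` at the `α_i⁻¹` and `|J| = deg σ̂`; (b) the error magnitudes are recovered by
the evaluation formula on `J` and vanish off `J`; and (c) `τ̂ = A σ̂ + w` with
`deg w < deg σ̂`. -/
theorem stmt6 [Fintype F] (K : Subfield F) (α : Fin n → F)
    (hα : Function.Injective α) (hα0 : ∀ i, α i ≠ 0)
    (g : F[X]) (t : ℕ) (ht : 1 ≤ t) (hgdeg : g.natDegree = t)
    (hgα : ∀ i, g.eval (α i) ≠ 0) (t₁ : ℕ) (ht₁ : 1 ≤ t₁) (η : F)
    (e : Fin n → F) (heK : ∀ i, e i ∈ K)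
    (hne : (errSupp e).Nonempty)
    (hw : 2 * (errSupp e).card ≤ t)
    (σh τh : F[X]) (hmonic : σh.Monic)
    (hdvd : (X ^ t : F[X]) ∣ synPoly α g t t₁ η e * σh - τh)
    (hcop : IsCoprime σh τh)
    (hdeg1 : τh.natDegree ≤ σh.natDegree)
    (hdeg2 : 2 * σh.natDegree ≤ t) :
    (σh = errLoc α e ∧ τh = errEval α g t t₁ η e) ↔
      ((errSupp e = Finset.univ.filter (fun i => σh.eval ((α i)⁻¹) = 0) ∧
          (errSupp e).card = σh.natDegree) ∧
        (∀ i, (i ∈ errSupp e →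
            e i = -(α i * g.eval (α i) * τh.eval ((α i)⁻¹) /
              (Polynomial.derivative σh).eval ((α i)⁻¹))) ∧
          (i ∉ errSupp e → e i = 0)) ∧
        (∃ w : F[X], τh = C (twistScalar α g t t₁ η e) * σh + w ∧
          w.degree < σh.degree)) := by
  set J := errSupp e with hJ
  set r : Fin n → F := fun i => (α i)⁻¹ with hr
  have hrinj : Function.Injective r := fun i j h => hα (inv_injective h)
  set A := twistScalar α g t t₁ η e with hA
  have hσmon : (errLoc α e).Monic := aux_loc_monic _ _
  have hσdeg : (errLoc α e).natDegree = J.card := aux_loc_natDegree _ _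
  have hσdegree : (errLoc α e).degree = (J.card : WithBot ℕ) := by
    rw [degree_eq_natDegree hσmon.ne_zero, hσdeg]
  -- derivative evaluations
  have hderiv : ∀ i ∈ J, (derivative (errLoc α e)).eval (r i) =
      ∏ j ∈ J.erase i, (r i - r j) := fun i hi => aux_deriv_eval J r hi
  have hPne : ∀ i : Fin n, ∏ j ∈ J.erase i, (r i - r j) ≠ 0 :=
    fun i => aux_prod_eval_ne_zero J hrinj
  -- evaluation of errEval at roots
  have hτeval : ∀ i ∈ J, (errEval α g t t₁ η e).eval (r i) =
      -((α i)⁻¹ * (g.eval (α i))⁻¹ * e i * ∏ j ∈ J.erase i, (r i - r j)) := by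
    intro i hi
    rw [errEval]
    simp only [eval_sub, eval_mul, eval_C, eval_finset_sum, eval_prod, eval_X]
    have h0 : (errLoc α e).eval (r i) = 0 := (aux_loc_eval_eq_zero_iff J hrinj i).mpr hi
    rw [h0, mul_zero, zero_sub, neg_inj]
    rw [Finset.sum_eq_single_of_mem i hi]
    intro b hb hbi
    rw [Finset.prod_eq_zero (Finset.mem_erase.mpr ⟨hbi.symm, hi⟩), mul_zero]
    exact sub_self _
  -- degree bound on the sum part of errEval
  have hSdeg : (∑ i ∈ J, C ((α i)⁻¹ * (g.eval (α i))⁻¹ * e i) *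
      ∏ j ∈ J.erase i, (X - C (α j)⁻¹)).degree < (J.card : WithBot ℕ) := by
    refine lt_of_le_of_lt (degree_sum_le _ _) ?_
    rw [Finset.sup_lt_iff (by exact WithBot.bot_lt_coe _)]
    intro i hi
    refine lt_of_le_of_lt (degree_mul_le _ _) ?_
    have h1 : (∏ j ∈ J.erase i, (X - C (α j)⁻¹)).degree = ((J.erase i).card : WithBot ℕ) := by
      rw [degree_eq_natDegree (aux_loc_monic (J.erase i) (fun j => (α j)⁻¹)).ne_zero,
        aux_loc_natDegree]
    calc (C ((α i)⁻¹ * (g.eval (α i))⁻¹ * e i)).degree +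
          (∏ j ∈ J.erase i, (X - C (α j)⁻¹)).degree
        ≤ 0 + ((J.erase i).card : WithBot ℕ) := add_le_add degree_C_le (le_of_eq h1)
      _ = ((J.erase i).card : WithBot ℕ) := zero_add _
      _ < (J.card : WithBot ℕ) := by
          rw [Finset.card_erase_of_mem hi]
          exact_mod_cast Nat.sub_lt (Finset.card_pos.mpr hne) one_pos
  constructor
  · rintro ⟨hσ, hτ⟩
    subst hσ hτ
    refine ⟨⟨?_, hσdeg.symm⟩, ?_, ?_⟩
    · ext i
      simp only [Finset.mem_filter, Finset.mem_univ, true_and]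
      exact ((aux_loc_eval_eq_zero_iff J hrinj i).symm)
    · intro i
      constructor
      · intro hi
        rw [hτeval i hi, hderiv i hi]
        field_simp [hα0 i, hgα i, hPne i]
      · intro hi
        by_contra h
        exact hi (Finset.mem_filter.mpr ⟨Finset.mem_univ i, h⟩)
    · refine ⟨-(∑ i ∈ J, C ((α i)⁻¹ * (g.eval (α i))⁻¹ * e i) *
        ∏ j ∈ J.erase i, (X - C (α j)⁻¹)), ?_, ?_⟩
      · rw [errEval, sub_eq_add_neg]
      · rw [degree_neg, hσdegree]
        exact hSdeg
  · rintro ⟨⟨ha1, ha2⟩, hb, w, hc, hwdeg⟩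
    have hσ : σh = errLoc α e := by
      have hdvdσ : errLoc α e ∣ σh := by
        apply aux_loc_dvd J hrinj
        intro i hi
        rw [ha1] at hi
        exact (Finset.mem_filter.mp hi).2
      obtain ⟨q, hq⟩ := hdvdσ
      have hqmon : q.Monic := hσmon.of_mul_monic_left (hq ▸ hmonic)
      have hqdeg : q.natDegree = 0 := by
        have := hq ▸ (ha2.symm)
        rw [hσmon.natDegree_mul hqmon, hσdeg] at this
        omega
      rw [hq, hqmon.natDegree_eq_zero.mp hqdeg, mul_one]
    subst hσ
    refine ⟨rfl, ?_⟩
    have hδdvd : errLoc α e ∣ τh - errEval α g t t₁ η e := by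
      apply aux_loc_dvd J hrinj
      intro i hi
      have h1 := (hb i).1 hi
      rw [hderiv i hi] at h1
      have h2 : τh.eval (r i) =
          -((α i)⁻¹ * (g.eval (α i))⁻¹ * e i * ∏ j ∈ J.erase i, (r i - r j)) := by
        rw [h1]
        field_simp [hα0 i, hgα i, hPne i]
        ring
        rfl
      rw [eval_sub, h2, hτeval i hi, sub_self]
    have hδdeg : (τh - errEval α g t t₁ η e).degree < (errLoc α e).degree := by
      have : τh - errEval α g t t₁ η e = w + (∑ i ∈ J, C ((α i)⁻¹ * (g.eval (α i))⁻¹ * e i) *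
          ∏ j ∈ J.erase i, (X - C (α j)⁻¹)) := by
        rw [hc, errEval]
        ring
      rw [this, hσdegree]
      refine lt_of_le_of_lt (degree_add_le _ _) (max_lt ?_ hSdeg)
      rw [← hσdegree]
      exact hwdeg
    exact sub_eq_zero.mp (eq_zero_of_dvd_of_degree_lt hδdvd hδdeg)
end

section
/- Let t := deg G(x) and let σ(x), τ(x) ∈ F[x] ∖ {0} satisfy deg σ(x) ≤ ⌊t/2⌋ and deg τ(x) ≤ deg σ(x), together with: (i) σ(x) S(x) ≡ τ(x) (mod G(x)); (ii) gcd(σ(x), τ(x)) = 1; (iii) deg σ(x) + deg τ(x) < deg G(x). If σ_i(x) and τ_i(x), for i ∈ {−1, 0, …, κ+1}, are the polynomials obtained from the extended Euclidean algorithm applied to (G(x), S(x)), then there exist a unique index ν ∈ {−1, 0, …, κ+1} and a unique nonzero constant μ ∈ F such that σ(x) = μ σ_ν(x) and τ(x) = μ τ_ν(x). -/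
open Polynomial

/-- Data produced by the extended Euclidean algorithm applied to polynomials
`G` and `S` over a field, with `G ≠ 0` and `deg S < deg G`.  Indices are
shifted by one relative to the paper: `T k`, `U k`, `V k`, `Q k` correspond to
`τ_{k-1}`, `u_{k-1}`, `σ_{k-1}`, `q_{k-1}` respectively, so `T 0 = τ_{-1} = G`,
`T 1 = τ_0 = S`, etc.  `κ` is the largest (paper) index with `τ_κ ≠ 0`, i.e.
`T (κ+1) ≠ 0` and `T (κ+2) = 0`. -/
structure EEAData (F : Type*) [Field F] (G S : Polynomial F) where
  T : ℕ → Polynomial F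
  U : ℕ → Polynomial F
  V : ℕ → Polynomial F
  Q : ℕ → Polynomial F
  κ : ℕ
  hT0 : T 0 = G
  hT1 : T 1 = S
  hU0 : U 0 = 1
  hU1 : U 1 = 0
  hV0 : V 0 = 0
  hV1 : V 1 = 1
  hrec : ∀ k : ℕ, 2 ≤ k → k ≤ κ + 2 →
    T (k - 2) = Q k * T (k - 1) + T k ∧
    (T k).degree < (T (k - 1)).degree ∧
    U k = U (k - 2) - Q k * U (k - 1) ∧
    V k = V (k - 2) - Q k * V (k - 1)
  hκ₁ : T (κ + 1) ≠ 0
  hκ₂ : T (κ + 2) = 0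

section Aux

variable {F : Type*} [Field F] {G S : Polynomial F}
  (hG : G ≠ 0) (hS : S.degree < G.degree) (E : EEAData F G S)

include hS in
/-- The degrees of the remainders strictly decrease. -/
lemma eea_dec (k : ℕ) (h1 : 1 ≤ k) (h2 : k ≤ E.κ + 2) :
    (E.T k).degree < (E.T (k - 1)).degree := by
  rcases Nat.eq_or_lt_of_le h1 with rfl | h
  · simpa [E.hT0, E.hT1] using hS
  · exact (E.hrec k h h2).2.1

include hS in
/-- The remainders up to index `κ+1` are nonzero. -/
lemma eea_Tne (k : ℕ) (hk : k ≤ E.κ + 1) : E.T k ≠ 0 := by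
  intro h0
  have h1 : (E.T (k + 1)).degree < (E.T k).degree := by
    have := eea_dec hS E (k + 1) (by omega) (by omega)
    simpa using this
  rw [h0, degree_zero] at h1
  exact (not_lt_bot h1)

include hS in
/-- Degrees of remainders are antitone. -/
lemma eea_mono (i j : ℕ) (hij : i ≤ j) (hj : j ≤ E.κ + 2) :
    (E.T j).degree ≤ (E.T i).degree := by
  induction j with
  | zero => simpa [Nat.le_zero.mp hij]
  | succ m ih =>
    rcases Nat.eq_or_lt_of_le hij with rfl | h
    · exact le_rfl
    · have h1 : (E.T (m + 1)).degree < (E.T m).degree := by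
        have := eea_dec hS E (m + 1) (by omega) hj
        simpa using this
      exact le_trans h1.le (ih (by omega) (by omega))

include hS in
/-- The quotients are nonzero and their degrees satisfy the expected relation. -/
lemma eea_Q (k : ℕ) (h1 : 2 ≤ k) (h2 : k ≤ E.κ + 2) :
    E.Q k ≠ 0 ∧ (E.Q k).natDegree + (E.T (k - 1)).natDegree = (E.T (k - 2)).natDegree := by
  obtain ⟨hre, hdlt, -, -⟩ := E.hrec k h1 h2
  have hT2 : E.T (k - 2) ≠ 0 := eea_Tne hS E _ (by omega)
  have hT1 : E.T (k - 1) ≠ 0 := eea_Tne hS E _ (by omega)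
  have hdec1 : (E.T (k - 1)).degree < (E.T (k - 2)).degree := by
    have := eea_dec hS E (k - 1) (by omega) (by omega)
    have e : k - 1 - 1 = k - 2 := by omega
    rwa [e] at this
  have hQ : E.Q k ≠ 0 := by
    intro h0
    rw [h0, zero_mul, zero_add] at hre
    rw [hre] at hdec1
    exact absurd (lt_trans hdlt hdec1) (lt_irrefl _)
  refine ⟨hQ, ?_⟩
  have hQT : E.Q k * E.T (k - 1) ≠ 0 := mul_ne_zero hQ hT1
  have hlt : (E.T k).degree < (E.Q k * E.T (k - 1)).degree := by
    refine lt_of_lt_of_le hdlt ?_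
    rw [degree_mul]
    calc (E.T (k-1)).degree = 0 + (E.T (k-1)).degree := (zero_add _).symm
    _ ≤ (E.Q k).degree + (E.T (k-1)).degree := by
        exact add_le_add_left (zero_le_degree_iff.mpr hQ) _
  have : (E.T (k - 2)).degree = (E.Q k * E.T (k - 1)).degree := by
    rw [hre, add_comm]
    exact degree_add_eq_right_of_degree_lt hlt
  rw [degree_eq_natDegree hT2, degree_mul, degree_eq_natDegree hQ,
    degree_eq_natDegree hT1, ← Nat.cast_add, Nat.cast_inj] at this
  omega

include hG hS in
/-- The `V` sequence: nonzero and degree relation `deg V k + deg T (k-1) = deg G`. -/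
lemma eea_V : ∀ k : ℕ, 1 ≤ k → k ≤ E.κ + 2 →
    E.V k ≠ 0 ∧ (E.V k).natDegree + (E.T (k - 1)).natDegree = G.natDegree := by
  intro k
  induction k using Nat.strong_induction_on with
  | _ k ih =>
    match k with
    | 0 => intro h _; exact absurd h (by omega)
    | 1 => intro _ _; simp [E.hV1, E.hT0]
    | 2 =>
      intro _ h2
      obtain ⟨hQ, hQd⟩ := eea_Q hS E 2 le_rfl h2
      have hv2 : E.V 2 = -E.Q 2 := by
        have := (E.hrec 2 le_rfl h2).2.2.2
        simpa [E.hV0, E.hV1] using this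
      constructor
      · rw [hv2]; simpa using hQ
      · rw [hv2, natDegree_neg]
        simpa [E.hT0] using hQd
    | (m + 3) =>
      intro _ h2
      have ih1 : E.V (m + 1) ≠ 0 ∧ (E.V (m+1)).natDegree + (E.T m).natDegree = G.natDegree := by
        have := ih (m + 1) (by omega) (by omega) (by omega); simpa using this
      have ih2 : E.V (m + 2) ≠ 0 ∧ (E.V (m+2)).natDegree + (E.T (m+1)).natDegree = G.natDegree := by
        have := ih (m + 2) (by omega) (by omega) (by omega); simpa using this
      obtain ⟨hQ, hQd₀⟩ := eea_Q hS E (m + 3) (by omega) h2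
      have hQd : (E.Q (m+3)).natDegree + (E.T (m+2)).natDegree = (E.T (m+1)).natDegree := by
        simpa using hQd₀
      have hTm : E.T m ≠ 0 := eea_Tne hS E _ (by omega)
      have hTm1 : E.T (m + 1) ≠ 0 := eea_Tne hS E _ (by omega)
      have hdec1 : (E.T (m + 1)).degree < (E.T m).degree := by
        have := eea_dec hS E (m + 1) (by omega) (by omega)
        simpa using this
      have hdecn : (E.T (m + 1)).natDegree < (E.T m).natDegree :=
        (natDegree_lt_natDegree_iff hTm1).mpr hdec1
      have hrec := (E.hrec (m + 3) (by omega) h2).2.2.2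
      have e1 : m + 3 - 2 = m + 1 := by omega
      have e2 : m + 3 - 1 = m + 2 := by omega
      rw [e1, e2] at hrec
      have hQV : E.Q (m + 3) * E.V (m + 2) ≠ 0 := mul_ne_zero hQ ih2.1
      have hQVd : (E.Q (m+3) * E.V (m+2)).natDegree
          = (E.Q (m+3)).natDegree + (E.V (m+2)).natDegree := natDegree_mul hQ ih2.1
      have hVlt : (E.V (m + 1)).natDegree < (E.Q (m+3) * E.V (m+2)).natDegree := by
        rw [hQVd]
        omega
      have hVltd : (E.V (m + 1)).degree < (E.Q (m+3) * E.V (m+2)).degree :=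
        (natDegree_lt_natDegree_iff ih1.1).mp hVlt
      have hdeg : (E.V (m + 3)).degree = (E.Q (m+3) * E.V (m+2)).degree := by
        rw [hrec]
        exact degree_sub_eq_right_of_degree_lt hVltd
      have hV3 : E.V (m + 3) ≠ 0 := by
        intro h0
        rw [h0, degree_zero] at hdeg
        exact hQV (degree_eq_bot.mp hdeg.symm)
      refine ⟨hV3, ?_⟩
      have hnd : (E.V (m + 3)).natDegree = (E.Q (m+3)).natDegree + (E.V (m+2)).natDegree := by
        rw [degree_eq_natDegree hV3, degree_eq_natDegree hQV, Nat.cast_inj] at hdeg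
        rw [hdeg, hQVd]
      have e3 : m + 3 - 1 = m + 2 := by omega
      rw [e3]
      omega

/-- `G` divides `T k - V k * S`. -/
lemma eea_key : ∀ k : ℕ, k ≤ E.κ + 2 → G ∣ E.T k - E.V k * S := by
  intro k
  induction k using Nat.strong_induction_on with
  | _ k ih =>
    match k with
    | 0 => intro _; simp [E.hT0, E.hV0]
    | 1 => intro _; simp [E.hT1, E.hV1]
    | (m + 2) =>
      intro h2
      obtain ⟨hre, -, -, hV⟩ := E.hrec (m + 2) (by omega) h2
      have e1 : m + 2 - 2 = m := by omega
      have e2 : m + 2 - 1 = m + 1 := by omega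
      rw [e1, e2] at hre hV
      have d1 := ih m (by omega) (by omega)
      have d2 := ih (m + 1) (by omega) (by omega)
      have heq : E.T (m + 2) - E.V (m + 2) * S
          = (E.T m - E.V m * S) - E.Q (m + 2) * (E.T (m + 1) - E.V (m + 1) * S) := by
        have hre' : E.T (m + 2) = E.T m - E.Q (m + 2) * E.T (m + 1) := by
          rw [hre]; ring
        rw [hre', hV]; ring
      rw [heq]
      exact dvd_sub d1 (Dvd.dvd.mul_left d2 _)

end Aux

/-- uniqueness of the key-equation solution among EEA outputs.
If `σ, τ ≠ 0` with `deg σ ≤ ⌊t/2⌋` (`t = deg G`), `deg τ ≤ deg σ`,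
`σ S ≡ τ (mod G)`, `gcd(σ, τ) = 1` and `deg σ + deg τ < deg G`, then there is a
unique (shifted) index `ν ∈ {0, …, κ + 2}` (paper index in `{-1, …, κ + 1}`)
and a unique nonzero `μ ∈ F` with `σ = μ σ_ν` and `τ = μ τ_ν`. -/
theorem stmt9 {F : Type*} [Field F] (G S : Polynomial F)
    (hG : G ≠ 0) (hS : S.degree < G.degree) (E : EEAData F G S)
    (σ τ : Polynomial F) (hσ : σ ≠ 0) (hτ : τ ≠ 0)
    (hσdeg : σ.natDegree ≤ G.natDegree / 2)
    (hτσ : τ.natDegree ≤ σ.natDegree)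
    (hkey : G ∣ σ * S - τ)
    (hcop : IsCoprime σ τ)
    (hsum : σ.natDegree + τ.natDegree < G.natDegree) :
    ∃! νμ : ℕ × F, νμ.1 ≤ E.κ + 2 ∧ νμ.2 ≠ 0 ∧
      σ = Polynomial.C νμ.2 * E.V νμ.1 ∧ τ = Polynomial.C νμ.2 * E.T νμ.1 := by
  classical
  -- the index predicate
  have hbot : σ.degree + (E.T (E.κ + 2)).degree < G.degree := by
    simp only [E.hκ₂, degree_zero, WithBot.add_bot]
    exact bot_lt_iff_ne_bot.mpr (degree_eq_bot.not.mpr hG)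
  have hex : ∃ k, σ.degree + (E.T k).degree < G.degree := ⟨E.κ + 2, hbot⟩
  obtain ⟨ν, hνdef⟩ : ∃ n : ℕ, n = Nat.find hex := ⟨_, rfl⟩
  have hPν : σ.degree + (E.T ν).degree < G.degree := hνdef ▸ Nat.find_spec hex
  have hνle : ν ≤ E.κ + 2 := hνdef ▸ Nat.find_le hbot
  have hν1 : 1 ≤ ν := by
    by_contra h
    have h0 : ν = 0 := by omega
    have := hPν
    rw [h0, E.hT0] at this
    have hle : G.degree ≤ σ.degree + G.degree :=
      le_add_of_nonneg_left (zero_le_degree_iff.mpr hσ)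
    exact absurd (lt_of_le_of_lt hle this) (lt_irrefl _)
  have hPν1 : ¬ (σ.degree + (E.T (ν - 1)).degree < G.degree) :=
    Nat.find_min hex (by omega)
  obtain ⟨hVν, hVνd⟩ := eea_V hG hS E ν hν1 hνle
  have hTν1 : E.T (ν - 1) ≠ 0 := eea_Tne hS E _ (by omega)
  -- deg V ν ≤ deg σ
  have hdle : G.natDegree ≤ σ.natDegree + (E.T (ν - 1)).natDegree := by
    rw [not_lt, degree_eq_natDegree hG, degree_eq_natDegree hσ,
      degree_eq_natDegree hTν1, ← Nat.cast_add, Nat.cast_le] at hPν1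
    exact hPν1
  have hVσ : (E.V ν).natDegree ≤ σ.natDegree := by omega
  -- G divides σ * T ν − τ * V ν
  have hdvd : G ∣ σ * E.T ν - τ * E.V ν := by
    have h1 : G ∣ E.T ν - E.V ν * S := eea_key E ν hνle
    have heq : σ * E.T ν - τ * E.V ν
        = σ * (E.T ν - E.V ν * S) + E.V ν * (σ * S - τ) := by ring
    rw [heq]
    exact dvd_add (Dvd.dvd.mul_left h1 _) (Dvd.dvd.mul_left hkey _)
  -- degree bound
  have hd1 : (σ * E.T ν).degree < G.degree := by
    rw [degree_mul]; exact hPν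
  have hd2 : (τ * E.V ν).degree < G.degree := by
    rw [degree_mul, degree_eq_natDegree hτ, degree_eq_natDegree hVν,
      degree_eq_natDegree hG, ← Nat.cast_add, Nat.cast_lt]
    omega
  have heq0 : σ * E.T ν = τ * E.V ν := by
    have h0 : σ * E.T ν - τ * E.V ν = 0 := by
      refine Polynomial.eq_zero_of_dvd_of_degree_lt hdvd ?_
      exact lt_of_le_of_lt (degree_sub_le _ _) (max_lt hd1 hd2)
    exact sub_eq_zero.mp h0
  -- σ divides V ν
  have hσdvd : σ ∣ E.V ν := by
    refine hcop.dvd_of_dvd_mul_left ?_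
    exact ⟨E.T ν, heq0.symm⟩
  obtain ⟨p, hp⟩ := hσdvd
  have hpne : p ≠ 0 := by
    intro h0; rw [h0, mul_zero] at hp; exact hVν hp
  have hpdeg : p.natDegree = 0 := by
    have := natDegree_mul hσ hpne
    rw [← hp] at this
    omega
  obtain ⟨c, hc⟩ := Polynomial.natDegree_eq_zero.mp hpdeg
  have hcne : c ≠ 0 := by
    intro h0; rw [h0, map_zero] at hc; exact hpne hc.symm
  have hVc : E.V ν = Polynomial.C c * σ := by rw [hp, ← hc, mul_comm]
  have hTc : E.T ν = Polynomial.C c * τ := by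
    have h1 : σ * E.T ν = σ * (Polynomial.C c * τ) := by
      rw [heq0, hVc]; ring
    exact mul_left_cancel₀ hσ h1
  have hσμ : σ = Polynomial.C c⁻¹ * E.V ν := by
    rw [hVc, ← mul_assoc, ← map_mul, inv_mul_cancel₀ hcne, map_one, one_mul]
  have hτμ : τ = Polynomial.C c⁻¹ * E.T ν := by
    rw [hTc, ← mul_assoc, ← map_mul, inv_mul_cancel₀ hcne, map_one, one_mul]
  refine ⟨(ν, c⁻¹), ⟨hνle, inv_ne_zero hcne, hσμ, hτμ⟩, ?_⟩
  rintro ⟨ν', μ'⟩ ⟨hν'le, hμ', h1, h2⟩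
  simp only at h1 h2 hν'le hμ' ⊢
  -- first show ν' = ν
  have hVν' : E.V ν' ≠ 0 := by
    intro h0; rw [h0, mul_zero] at h1; exact hσ h1
  have hTν' : E.T ν' ≠ 0 := by
    intro h0; rw [h0, mul_zero] at h2; exact hτ h2
  have hν'1 : 1 ≤ ν' := by
    by_contra h
    have h0 : ν' = 0 := by omega
    rw [h0, E.hV0] at hVν'
    exact hVν' rfl
  have hν'κ : ν' ≤ E.κ + 1 := by
    rcases Nat.lt_or_ge ν' (E.κ + 2) with h | h
    · omega
    · exfalso
      have : ν' = E.κ + 2 := by omega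
      rw [this, E.hκ₂] at hTν'
      exact hTν' rfl
  obtain ⟨-, hVν'd⟩ := eea_V hG hS E ν' hν'1 (by omega)
  have hτd : τ.natDegree = (E.T ν').natDegree := by
    rw [h2, natDegree_mul (by simpa using hμ') hTν', natDegree_C, zero_add]
  have hσd : σ.natDegree = (E.V ν').natDegree := by
    rw [h1, natDegree_mul (by simpa using hμ') hVν', natDegree_C, zero_add]
  have hTν'1 : E.T (ν' - 1) ≠ 0 := eea_Tne hS E _ (by omega)
  -- ν' satisfies P
  have hPν' : σ.degree + (E.T ν').degree < G.degree := by
    rw [degree_eq_natDegree hσ, degree_eq_natDegree hTν', degree_eq_natDegree hG,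
      ← Nat.cast_add, Nat.cast_lt]
    omega
  have hle1 : ν ≤ ν' := hνdef ▸ Nat.find_le hPν'
  -- ν' - 1 does not satisfy P
  have hnP : ¬ (σ.degree + (E.T (ν' - 1)).degree < G.degree) := by
    rw [not_lt, degree_eq_natDegree hσ, degree_eq_natDegree hTν'1, degree_eq_natDegree hG,
      ← Nat.cast_add, Nat.cast_le]
    omega
  have hle2 : ν' ≤ ν := by
    by_contra h
    push_neg at h
    -- then ν ≤ ν' - 1, so T (ν'-1) has degree ≤ T ν, contradicting ¬P (ν'-1)
    have hmono : (E.T (ν' - 1)).degree ≤ (E.T ν).degree :=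
      eea_mono hS E ν (ν' - 1) (by omega) (by omega)
    exact hnP (lt_of_le_of_lt (add_le_add_right hmono _) hPν)
  have hνν : ν' = ν := by omega
  rw [Prod.mk.injEq]
  refine ⟨hνν, ?_⟩
  -- μ' = c⁻¹
  rw [hνν] at h1
  have h3 : Polynomial.C μ' * E.V ν = Polynomial.C c⁻¹ * E.V ν := by
    rw [← h1, hσμ]
  have h4 : Polynomial.C μ' = Polynomial.C c⁻¹ := mul_right_cancel₀ hVν h3
  exact Polynomial.C_injective h4
end

section
/- Let t := deg G(x) be even and suppose σ(x), τ(x) ∈ F[x] ∖ {0} satisfy: (i) σ(x) S(x) ≡ τ(x) (mod G(x)); (ii) gcd(σ(x), τ(x)) = 1; (iii) deg τ(x) ≤ deg σ(x) = t/2. If σ_i(x) and τ_i(x), for i ∈ {−1, 0, …, κ+1}, are the polynomials obtained from the extended Euclidean algorithm applied to (G(x), S(x)), and ν is the least index such that deg τ_ν(x) < t/2, then there exist μ_1 ∈ F and μ_2 ∈ F ∖ {0} such that σ(x) = μ_1 σ_{ν−1}(x) + μ_2 σ_ν(x) and τ(x) = μ_1 τ_{ν−1}(x) + μ_2 τ_ν(x).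 Moreover, if in (iii) one has deg τ(x) < deg σ(x) = t/2, then μ_1 = 0. -/
open Polynomial

namespace EEAData

variable {F : Type*} [Field F] {G S : Polynomial F}

lemma T_ne_zero (E : EEAData F G S) (hG : G ≠ 0) {j : ℕ} (hj : j ≤ E.κ + 1) :
    E.T j ≠ 0 := by
  match j with
  | 0 => rw [E.hT0]; exact hG
  | (m+1) =>
    intro h
    obtain ⟨-, hdeg, -, -⟩ := E.hrec (m + 2) (by omega) (by omega)
    rw [show m + 2 - 1 = m + 1 from rfl, h, degree_zero] at hdeg
    exact not_lt_bot hdeg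

lemma bezout (E : EEAData F G S) : ∀ k, k ≤ E.κ + 2 → E.U k * G + E.V k * S = E.T k := by
  intro k
  induction k using Nat.strong_induction_on with
  | _ k ih =>
    match k with
    | 0 => intro _; rw [E.hT0, E.hU0, E.hV0]; ring
    | 1 => intro _; rw [E.hT1, E.hU1, E.hV1]; ring
    | (n+2) =>
      intro hk
      obtain ⟨hT, -, hU, hV⟩ := E.hrec (n+2) (by omega) hk
      rw [show n+2-2 = n from rfl, show n+2-1 = n+1 from rfl] at hT hU hV
      have i1 := ih n (by omega) (by omega)
      have i2 := ih (n+1) (by omega) (by omega)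
      rw [hU, hV]
      linear_combination i1 - E.Q (n+2) * i2 + hT

lemma det (E : EEAData F G S) : ∀ k, 1 ≤ k → k ≤ E.κ + 2 →
    E.T (k-1) * E.V k - E.T k * E.V (k-1) = (-1)^(k-1) * G := by
  intro k
  induction k using Nat.strong_induction_on with
  | _ k ih =>
    match k with
    | 0 => intro h _; exact absurd h (by omega)
    | 1 => intro _ _; simp [E.hT0, E.hT1, E.hV0, E.hV1]
    | (n+2) =>
      intro _ hk
      obtain ⟨hT, -, -, hV⟩ := E.hrec (n+2) (by omega) hk
      rw [show n+2-2 = n from rfl, show n+2-1 = n+1 from rfl] at hT hV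
      have i := ih (n+1) (by omega) (by omega) (by omega)
      rw [show n+1-1 = n from rfl] at i
      rw [show n+2-1 = n+1 from rfl, hV]
      linear_combination -i + (E.V (n+1)) * hT

lemma Vdeg (E : EEAData F G S) (hG : G ≠ 0) (hS : S.degree < G.degree) :
    ∀ k, 1 ≤ k → k ≤ E.κ + 2 →
      E.V k ≠ 0 ∧ (E.V k).natDegree + (E.T (k-1)).natDegree = G.natDegree ∧
      (E.V (k-1)).degree < (E.V k).degree := by
  intro k
  induction k using Nat.strong_induction_on with
  | _ k ih =>
    match k with
    | 0 =>
      intro h _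
      exact absurd h (by omega)
    | 1 =>
      intro _ _
      refine ⟨by rw [E.hV1]; exact one_ne_zero, by simp [E.hV1, E.hT0], ?_⟩
      rw [E.hV0, E.hV1, degree_zero, degree_one]
      exact bot_lt_iff_ne_bot.2 (by simp)
    | (n+2) =>
      intro _ hk
      obtain ⟨hT, hd2, -, hV⟩ := E.hrec (n+2) (by omega) hk
      rw [show n+2-1 = n+1 from rfl] at hT hd2 hV
      rw [show n+2-2 = n from rfl] at hT hV
      have Tn0 : E.T n ≠ 0 := E.T_ne_zero hG (by omega)
      have Tn1 : E.T (n+1) ≠ 0 := E.T_ne_zero hG (by omega)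
      have hd1 : (E.T (n+1)).degree < (E.T n).degree := by
        rcases Nat.eq_zero_or_pos n with h0 | h0
        · subst h0; rw [E.hT0, E.hT1]; exact hS
        · have := (E.hrec (n+1) (by omega) (by omega)).2.1
          rwa [show n+1-1 = n from rfl] at this
      obtain ⟨hVn1, hsum1, hmon1⟩ := ih (n+1) (by omega) (by omega) (by omega)
      rw [show n+1-1 = n from rfl] at hsum1 hmon1
      have hQ0 : E.Q (n+2) ≠ 0 := by
        intro h
        rw [h, zero_mul, zero_add] at hT
        rw [← hT] at hd2
        exact absurd (hd2.trans hd1) (lt_irrefl _)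
      have hQT : (E.Q (n+2) * E.T (n+1)).degree = (E.T n).degree := by
        have : E.Q (n+2) * E.T (n+1) = E.T n - E.T (n+2) := by linear_combination -hT
        rw [this]
        exact degree_sub_eq_left_of_degree_lt (hd2.trans hd1)
      have nQ : (E.Q (n+2)).natDegree + (E.T (n+1)).natDegree = (E.T n).natDegree := by
        rw [← natDegree_mul hQ0 Tn1]
        exact natDegree_eq_of_degree_eq hQT
      have nQ1 : 1 ≤ (E.Q (n+2)).natDegree := by
        have := natDegree_lt_natDegree Tn1 hd1
        omega
      have hQV0 : E.Q (n+2) * E.V (n+1) ≠ 0 := mul_ne_zero hQ0 hVn1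
      have hlt : (E.V n).degree < (E.Q (n+2) * E.V (n+1)).degree := by
        refine hmon1.trans_le ?_
        rw [degree_mul]
        calc (E.V (n+1)).degree = 0 + (E.V (n+1)).degree := (zero_add _).symm
          _ ≤ (E.Q (n+2)).degree + (E.V (n+1)).degree :=
            add_le_add_left (zero_le_degree_iff.2 hQ0) _
      have hVdeg : (E.V (n+2)).degree = (E.Q (n+2) * E.V (n+1)).degree := by
        rw [hV]
        rw [show E.V n - E.Q (n+2) * E.V (n+1) = -(E.Q (n+2) * E.V (n+1) - E.V n) by ring,
          degree_neg]
        exact degree_sub_eq_left_of_degree_lt hlt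
      have hVne : E.V (n+2) ≠ 0 := by
        intro h
        rw [h, degree_zero] at hVdeg
        exact hQV0 (degree_eq_bot.1 hVdeg.symm)
      have nV : (E.V (n+2)).natDegree = (E.Q (n+2)).natDegree + (E.V (n+1)).natDegree := by
        rw [← natDegree_mul hQ0 hVn1]
        exact natDegree_eq_of_degree_eq hVdeg
      rw [show n+2-1 = n+1 from rfl]
      refine ⟨hVne, by omega, ?_⟩
      calc (E.V (n+1)).degree ≤ ((E.V (n+1)).natDegree : WithBot ℕ) := degree_le_natDegree
        _ < ((E.V (n+2)).natDegree : WithBot ℕ) := by exact_mod_cast (by omega : (E.V (n+1)).natDegree < (E.V (n+2)).natDegree)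
        _ = (E.V (n+2)).degree := (degree_eq_natDegree hVne).symm

end EEAData

/-- the boundary case `deg σ = t/2` with `t = deg G` even.
If `σ, τ ≠ 0` satisfy `σ S ≡ τ (mod G)`, `gcd(σ, τ) = 1` and
`deg τ ≤ deg σ = t/2`, and `N` is the least (shifted) index with
`deg τ_N < t/2` (here `deg p < t/2` is expressed as `2 * deg p < t`, valid also
for `p = 0`), then `σ = μ₁ σ_{N-1} + μ₂ σ_N` and `τ = μ₁ τ_{N-1} + μ₂ τ_N` for
some `μ₁ ∈ F` and `μ₂ ∈ F ∖ {0}`; moreover if `deg τ < deg σ` then `μ₁ = 0`. -/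
theorem stmt10 {F : Type*} [Field F] (G S : Polynomial F)
    (hG : G ≠ 0) (hS : S.degree < G.degree) (E : EEAData F G S)
    (hEven : Even G.natDegree)
    (σ τ : Polynomial F) (hσ : σ ≠ 0) (hτ : τ ≠ 0)
    (hkey : G ∣ σ * S - τ)
    (hcop : IsCoprime σ τ)
    (hτσ : τ.natDegree ≤ σ.natDegree)
    (hσdeg : σ.natDegree = G.natDegree / 2)
    (N : ℕ)
    (hNlt : 2 * (E.T N).natDegree < G.natDegree)
    (hNleast : ∀ k < N, ¬ 2 * (E.T k).natDegree < G.natDegree) :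
    ∃ μ₁ μ₂ : F, μ₂ ≠ 0 ∧
      σ = Polynomial.C μ₁ * E.V (N - 1) + Polynomial.C μ₂ * E.V N ∧
      τ = Polynomial.C μ₁ * E.T (N - 1) + Polynomial.C μ₂ * E.T N ∧
      (τ.natDegree < σ.natDegree → μ₁ = 0) := by
  obtain ⟨m, hm⟩ := hEven
  have htpos : 0 < G.natDegree := by omega
  have hm1 : 1 ≤ m := by omega
  have hσm : σ.natDegree = m := by omega
  have hτm : τ.natDegree ≤ m := by omega
  have hN1 : 1 ≤ N := by
    rcases Nat.eq_zero_or_pos N with h | h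
    · rw [h, E.hT0] at hNlt; omega
    · exact h
  have hNκ : N ≤ E.κ + 2 := by
    by_contra h
    push_neg at h
    have := hNleast (E.κ + 2) h
    rw [E.hκ₂] at this
    simp only [Polynomial.natDegree_zero, Nat.mul_zero] at this
    omega
  obtain ⟨n, rfl⟩ : ∃ n, N = n + 1 := ⟨N - 1, by omega⟩
  simp only [Nat.add_sub_cancel]
  have hTn : E.T n ≠ 0 := E.T_ne_zero hG (by omega)
  have ham : m ≤ (E.T n).natDegree := by
    have := hNleast n (by omega); omega
  have hTN1 : (E.T (n+1)).natDegree ≤ m - 1 := by omega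
  have hBN := E.bezout (n+1) hNκ
  have hBN1 := E.bezout n (by omega)
  have hdet := E.det (n+1) (by omega) hNκ
  simp only [Nat.add_sub_cancel] at hdet
  obtain ⟨hVNne, hVNdeg, -⟩ := E.Vdeg hG hS (n+1) (by omega) hNκ
  simp only [Nat.add_sub_cancel] at hVNdeg
  have hVNle : (E.V (n+1)).natDegree ≤ m := by omega
  -- degree of V n is < m
  have hVn1deg : (E.V n).degree < (m : WithBot ℕ) := by
    rcases Nat.eq_zero_or_pos n with h0 | h0
    · rw [h0, E.hV0, Polynomial.degree_zero]
      exact bot_lt_iff_ne_bot.2 (by simp)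
    · obtain ⟨hne, hdeg, -⟩ := E.Vdeg hG hS n h0 (by omega)
      have hTn2 : m < (E.T (n-1)).natDegree := by
        rcases Nat.lt_or_ge n 2 with h2 | h2
        · have hn1 : n = 1 := by omega
          rw [hn1]
          simp only [Nat.sub_self, E.hT0]
          omega
        · have hr := (E.hrec n h2 (by omega)).2.1
          have := Polynomial.natDegree_lt_natDegree hTn hr
          omega
      have hlt : (E.V n).natDegree < m := by omega
      rw [Polynomial.degree_eq_natDegree hne]
      exact_mod_cast hlt
  obtain ⟨w, hw⟩ := hkey
  obtain ⟨c₁, hA⟩ : ∃ c, σ * E.T (n+1) - τ * E.V (n+1) = G * c :=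
    ⟨σ * E.U (n+1) + E.V (n+1) * w, by linear_combination (-σ) * hBN + E.V (n+1) * hw⟩
  obtain ⟨c₂, hB⟩ : ∃ c, σ * E.T n - τ * E.V n = G * c :=
    ⟨σ * E.U n + E.V n * w, by linear_combination (-σ) * hBN1 + E.V n * hw⟩
  have key1 : c₂ * E.V (n+1) - c₁ * E.V n = (-1)^n * σ := by
    apply mul_left_cancel₀ hG
    linear_combination (-(E.V (n+1))) * hB + (E.V n) * hA + σ * hdet
  have key2 : c₂ * E.T (n+1) - c₁ * E.T n = (-1)^n * τ := by
    apply mul_left_cancel₀ hG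
    linear_combination (-(E.T (n+1))) * hB + (E.T n) * hA + τ * hdet
  -- generic degree bound for products
  have hmul : ∀ (p q : Polynomial F) (x y : ℕ), p.natDegree ≤ x → q.natDegree ≤ y →
      (p * q).degree ≤ ((x + y : ℕ) : WithBot ℕ) := by
    intro p q x y hx hy
    refine le_trans (Polynomial.degree_mul_le _ _) ?_
    have h1 : p.degree ≤ (x : WithBot ℕ) := Polynomial.natDegree_le_iff_degree_le.1 hx
    have h2 : q.degree ≤ (y : WithBot ℕ) := Polynomial.natDegree_le_iff_degree_le.1 hy
    calc p.degree + q.degree ≤ (x : WithBot ℕ) + (y : WithBot ℕ) := add_le_add h1 h2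
      _ = ((x + y : ℕ) : WithBot ℕ) := by norm_cast
  have hGc₁bound : ∀ b : ℕ, m - 1 ≤ b → τ.natDegree ≤ b →
      (G * c₁).degree ≤ ((m + b : ℕ) : WithBot ℕ) := by
    intro b hb hτb
    rw [← hA]
    refine le_trans (Polynomial.degree_sub_le _ _) (max_le ?_ ?_)
    · exact hmul σ (E.T (n+1)) m b (le_of_eq hσm) (by omega)
    · have := hmul τ (E.V (n+1)) b m hτb hVNle
      rwa [Nat.add_comm b m] at this
  have hc₁deg : c₁.natDegree = 0 := by
    by_cases hc : c₁ = 0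
    · simp [hc]
    · have h1 := hGc₁bound m (by omega) hτm
      have h2 : (G * c₁).natDegree ≤ m + m := Polynomial.natDegree_le_iff_degree_le.2 h1
      rw [Polynomial.natDegree_mul hG hc] at h2
      omega
  have hc₁C : c₁ = Polynomial.C (c₁.coeff 0) :=
    Polynomial.eq_C_of_natDegree_le_zero (le_of_eq hc₁deg)
  have hc₁0 : τ.natDegree < m → c₁ = 0 := by
    intro hlt
    by_contra hc
    have h1 := hGc₁bound (m-1) (le_refl _) (by omega)
    have h2 : (G * c₁).natDegree ≤ m + (m - 1) := Polynomial.natDegree_le_iff_degree_le.2 h1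
    rw [Polynomial.natDegree_mul hG hc] at h2
    omega
  obtain ⟨μ₁, hμ₁C, hμ₁0⟩ : ∃ μ₁ : F,
      (Polynomial.C μ₁ : Polynomial F) = -((-1)^n * c₁) ∧ (c₁ = 0 → μ₁ = 0) := by
    refine ⟨-((-1:F)^n * c₁.coeff 0), ?_, ?_⟩
    · rw [map_neg, map_mul, map_pow, map_neg, map_one, ← hc₁C]
    · intro h; rw [h] at hc₁C ⊢; simp
  have hsq : ((-1 : Polynomial F))^n * ((-1 : Polynomial F))^n = 1 := by
    rw [← mul_pow]; norm_num
  have hσeq : σ = Polynomial.C μ₁ * E.V n + ((-1 : Polynomial F)^n * c₂) * E.V (n+1) := by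
    linear_combination (-((-1:Polynomial F)^n)) * key1 - σ * hsq - (E.V n) * hμ₁C
  have hτeq : τ = Polynomial.C μ₁ * E.T n + ((-1 : Polynomial F)^n * c₂) * E.T (n+1) := by
    linear_combination (-((-1:Polynomial F)^n)) * key2 - τ * hsq - (E.T n) * hμ₁C
  set p₂ : Polynomial F := (-1 : Polynomial F)^n * c₂ with hp₂def
  have hσdegree : σ.degree = (m : WithBot ℕ) := by
    rw [Polynomial.degree_eq_natDegree hσ, hσm]
  have hCVn : (Polynomial.C μ₁ * E.V n).degree < σ.degree := by
    rw [hσdegree]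
    refine lt_of_le_of_lt (le_trans (Polynomial.degree_mul_le _ _) ?_) hVn1deg
    calc (Polynomial.C μ₁).degree + (E.V n).degree ≤ 0 + (E.V n).degree :=
          add_le_add_left Polynomial.degree_C_le _
      _ = (E.V n).degree := zero_add _
  have hp₂V : (p₂ * E.V (n+1)).degree = (m : WithBot ℕ) := by
    have heq : p₂ * E.V (n+1) = σ - Polynomial.C μ₁ * E.V n := by
      rw [hσeq]; ring
    rw [heq, Polynomial.degree_sub_eq_left_of_degree_lt hCVn, hσdegree]
  have hp₂ne : p₂ ≠ 0 := by
    intro h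
    rw [h, zero_mul, Polynomial.degree_zero] at hp₂V
    exact absurd hp₂V.symm (by simp)
  have hp₂n : p₂.natDegree + (E.V (n+1)).natDegree = m := by
    rw [← Polynomial.natDegree_mul hp₂ne hVNne]
    exact Polynomial.natDegree_eq_of_degree_eq_some hp₂V
  have ha' : (E.T n).natDegree = m := by
    by_contra hne'
    have had : m < (E.T n).natDegree := by omega
    have hd1 : 1 ≤ p₂.natDegree := by omega
    have hμ₁z : μ₁ = 0 := by
      by_contra hμne
      have h1 : (Polynomial.C μ₁ * E.T n).degree = ((E.T n).natDegree : WithBot ℕ) := by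
        rw [Polynomial.degree_mul, Polynomial.degree_C hμne, zero_add,
          Polynomial.degree_eq_natDegree hTn]
      have h2 : (p₂ * E.T (n+1)).degree < ((E.T n).natDegree : WithBot ℕ) := by
        refine lt_of_le_of_lt (hmul p₂ (E.T (n+1)) p₂.natDegree (m-1) (le_refl _) hTN1) ?_
        exact_mod_cast (by omega : p₂.natDegree + (m - 1) < (E.T n).natDegree)
      have hτdeg : τ.degree = ((E.T n).natDegree : WithBot ℕ) := by
        rw [hτeq, Polynomial.degree_add_eq_left_of_degree_lt (by rw [h1]; exact h2), h1]
      have := Polynomial.natDegree_eq_of_degree_eq_some hτdeg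
      omega
    rw [hμ₁z, map_zero, zero_mul, zero_add] at hσeq hτeq
    obtain ⟨u, v, huv⟩ := hcop
    have hone : p₂ * (u * E.V (n+1) + v * E.T (n+1)) = 1 := by
      rw [← huv, hσeq, hτeq]; ring
    have := Polynomial.natDegree_eq_zero_of_isUnit (IsUnit.of_mul_eq_one _ hone)
    omega
  have hp₂deg : p₂.natDegree = 0 := by omega
  have hp₂C : p₂ = Polynomial.C (p₂.coeff 0) :=
    Polynomial.eq_C_of_natDegree_le_zero (le_of_eq hp₂deg)
  refine ⟨μ₁, p₂.coeff 0, ?_, ?_, ?_, ?_⟩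
  · intro h
    apply hp₂ne
    rw [hp₂C, h, map_zero]
  · rw [← hp₂C]; exact hσeq
  · rw [← hp₂C]; exact hτeq
  · intro hlt
    exact hμ₁0 (hc₁0 (by omega))
end

section
/- Let a, b ∈ 𝔽_{q^m} with a ≠ 0 and a² = 1, and suppose L is σ_{a,b}-invariant, i.e., {a α + b : α ∈ L} = L, with induced permutation σ of {1, …, n} given by α_{σ(i)} = a α_i + b. Then for every c = (c_1, …, c_n) ∈ 𝔽_q^n, c ∈ Γ(L, g(x), 1, t−2, η) if and only if (c_{σ(1)}, …, c_{σ(n)}) ∈ Γ(L, ĝ(x), 1, t−2, η), where ĝ(x) := g(a x + b); in particular, c ↦ (c_{σ(1)}, …, c_{σ(n)}) is a bijection from Γ(L, g(x), 1, t−2, η) onto Γ(L, g(ax+b), 1, t−2, η). -/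
open Polynomial Finset

lemma sum_split {F : Type*} [Field F] {n : ℕ} (w f g : Fin n → F) (η : F) :
    ∑ i, w i * (f i + η * g i) = ∑ i, w i * f i + η * ∑ i, w i * g i := by
  rw [Finset.mul_sum, ← Finset.sum_add_distrib]
  exact Finset.sum_congr rfl fun i _ => by ring

lemma key {p : ℕ} (hp : p.Prime) (hodd : Odd p)
    {F : Type*} [Field F] [CharP F p]
    {n : ℕ} (s : ℕ) (hs : 1 ≤ s) (t : ℕ) (htdef : t = 1 + p ^ s)
    (η u v : F) (hu : u ^ 2 = 1)
    (w β : Fin n → F)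
    (H1 : ∀ l < t, l ≠ t - 2 → ∑ i, w i * β i ^ l = 0)
    (H2 : ∑ i, w i * (β i ^ (t - 2) + η * β i ^ t) = 0) :
    (∀ l < t, l ≠ t - 2 → ∑ i, w i * (u * β i + v) ^ l = 0) ∧
    ∑ i, w i * ((u * β i + v) ^ (t - 2) + η * (u * β i + v) ^ t) = 0 := by
  haveI : Fact p.Prime := ⟨hp⟩
  have hp3 : 3 ≤ p := by
    have h2 := hp.two_le
    rcases hp.eq_two_or_odd with h | h
    · exact absurd (h ▸ hodd) (by decide)
    · omega
  have hP3 : 3 ≤ p ^ s := le_trans hp3 (Nat.le_self_pow (n := s) (by omega) p)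
  have ht : t = p ^ s + 1 := by omega
  have expand : ∀ l : ℕ, ∑ i, w i * (u * β i + v) ^ l =
      ∑ k ∈ Finset.range (l + 1),
        (l.choose k : F) * (u ^ k * v ^ (l - k)) * ∑ i, w i * β i ^ k := by
    intro l
    simp only [add_pow, Finset.mul_sum]
    rw [Finset.sum_comm]
    refine Finset.sum_congr rfl fun k _ => ?_
    refine Finset.sum_congr rfl fun i _ => ?_
    rw [mul_pow]; ring
  constructor
  · intro l hl hl2
    rw [expand l]
    refine Finset.sum_eq_zero fun k hk => ?_
    rw [Finset.mem_range] at hk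
    rcases eq_or_ne k (t - 2) with rfl | hk2
    · have hl3 : l = p ^ s := by omega
      have hc : (l.choose (t - 2) : F) = 0 := by
        have : l.choose (t - 2) = p ^ s := by
          rw [hl3, show t - 2 = p ^ s - 1 by omega]
          have := Nat.choose_symm (n := p ^ s) (k := 1) (by omega)
          simpa [Nat.choose_one_right] using this
        rw [this, Nat.cast_pow, CharP.cast_eq_zero F p,
          zero_pow (by omega : s ≠ 0)]
      rw [hc]; ring
    · rw [H1 k (by omega) hk2, mul_zero]
  · have hpowt : ∀ x y : F, (x + y) ^ t = x ^ p ^ s * x + x ^ p ^ s * y + x * y ^ p ^ s + y ^ p ^ s * y := by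
      intro x y
      rw [ht, pow_succ, add_pow_char_pow]
      ring
    have hB : ∑ i, w i * (u * β i + v) ^ t =
        (u ^ p ^ s * u) * ∑ i, w i * β i ^ t
        + (u ^ p ^ s * v) * ∑ i, w i * β i ^ p ^ s
        + (u * v ^ p ^ s) * ∑ i, w i * β i ^ 1
        + (v ^ p ^ s * v) * ∑ i, w i * β i ^ 0 := by
      simp only [Finset.mul_sum, ← Finset.sum_add_distrib]
      refine Finset.sum_congr rfl fun i _ => ?_
      rw [hpowt (u * β i) v, mul_pow, show β i ^ t = β i ^ p ^ s * β i by rw [ht, pow_succ]]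
      ring
    have hA : ∑ i, w i * (u * β i + v) ^ (t - 2) =
        u ^ (t - 2) * ∑ i, w i * β i ^ (t - 2) := by
      rw [expand (t - 2), Finset.sum_range_succ]
      rw [Finset.sum_eq_zero fun k hk => ?_, zero_add]
      · simp [Nat.choose_self]
      · rw [Finset.mem_range] at hk
        rw [H1 k (by omega) (by omega), mul_zero]
    rw [sum_split, hA, hB, H1 (p ^ s) (by omega) (by omega),
      H1 1 (by omega) (by omega), H1 0 (by omega) (by omega)]
    have hsplit := sum_split w (fun i => β i ^ (t - 2)) (fun i => β i ^ t) η
    rw [hsplit] at H2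
    have hut : u ^ p ^ s * u = u ^ (t - 2) := by
      calc u ^ p ^ s * u = u ^ (p ^ s + 1) := by rw [pow_succ]
        _ = u ^ (t - 2) * u ^ 2 := by rw [show p ^ s + 1 = (t - 2) + 2 by omega, pow_add]
        _ = u ^ (t - 2) := by rw [hu, mul_one]
    rw [hut]
    linear_combination u ^ (t - 2) * H2

/-- The twisted Goppa code `Γ(L, g, 1, t-2, η)` (single twist, twist order
`t₁ = 1`, hook `h = t - 2`), given by its parity-check equations:
`Σ_i c_i α_i^l g(α_i)⁻¹ = 0` for every `l < t` with `l ≠ t - 2`, and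
`Σ_i c_i (α_i^{t-2} + η α_i^t) g(α_i)⁻¹ = 0`. -/
def TGoppaQC {F : Type*} [Field F] (K : Subfield F) {n : ℕ} (α : Fin n → F)
    (g : F[X]) (t : ℕ) (η : F) : Set (Fin n → F) :=
  {c | (∀ i, c i ∈ K) ∧
    (∀ l : ℕ, l < t → l ≠ t - 2 → ∑ i, c i * α i ^ l / g.eval (α i) = 0) ∧
    ∑ i, c i * ((α i ^ (t - 2) + η * α i ^ t) / g.eval (α i)) = 0}

/-- for `a² = 1`, `a ≠ 0`, an `σ_{a,b}`-invariant support `L`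
with induced permutation `σ` (i.e. `α_{σ(i)} = a α_i + b`), the map
`c ↦ (c_{σ(1)}, …, c_{σ(n)})` is a bijection from `Γ(L, g(x), 1, t-2, η)` onto
`Γ(L, g(ax+b), 1, t-2, η)`: `c` is a codeword of the former iff `c ∘ σ` is a
codeword of the latter. -/
theorem stmt12 {p : ℕ} (hp : p.Prime) (hodd : Odd p)
    {F : Type*} [Field F] [Fintype F] [CharP F p] (K : Subfield F)
    {n : ℕ} (α : Fin n → F) (hα : Function.Injective α)
    (s : ℕ) (hs : 1 ≤ s) (t : ℕ) (htdef : t = 1 + p ^ s)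
    (g : F[X]) (hgdeg : g.degree = (t : ℕ))
    (hgα : ∀ i, g.eval (α i) ≠ 0) (η : F)
    (a b : F) (ha0 : a ≠ 0) (ha : a ^ 2 = 1)
    (σ : Equiv.Perm (Fin n)) (hσ : ∀ i, α (σ i) = a * α i + b)
    (c : Fin n → F) :
    c ∈ TGoppaQC K α g t η ↔
      (fun i => c (σ i)) ∈ TGoppaQC K α (g.comp (C a * X + C b)) t η := by
  set w : Fin n → F := fun j => c j / g.eval (α j) with hw
  have hev : ∀ x : F, (g.comp (C a * X + C b)).eval x = g.eval (a * x + b) := by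
    intro x; simp [eval_comp]
  have hσinv : ∀ j, α (σ⁻¹ j) = a * α j + -(a * b) := by
    intro j
    have h := hσ (σ⁻¹ j)
    rw [show σ (σ⁻¹ j) = j from σ.apply_symm_apply j] at h
    linear_combination (-a) * h + (-(α (σ⁻¹ j))) * ha
  -- the RHS sums, reindexed
  have reidx1 : ∀ l : ℕ,
      ∑ i, c (σ i) * α i ^ l / (g.comp (C a * X + C b)).eval (α i)
        = ∑ j, w j * (a * α j + -(a * b)) ^ l := by
    intro l
    rw [← Equiv.sum_comp σ (fun j => w j * (a * α j + -(a * b)) ^ l)]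
    refine Finset.sum_congr rfl fun i _ => ?_
    rw [hev, ← hσ i, hw]
    have : a * α (σ i) + -(a * b) = α i := by
      rw [hσ i]; linear_combination (α i) * ha
    rw [this]
    field_simp
  have reidx2 :
      ∑ i, c (σ i) * ((α i ^ (t - 2) + η * α i ^ t) /
          (g.comp (C a * X + C b)).eval (α i))
        = ∑ j, w j * ((a * α j + -(a * b)) ^ (t - 2)
            + η * (a * α j + -(a * b)) ^ t) := by
    rw [← Equiv.sum_comp σ (fun j => w j * ((a * α j + -(a * b)) ^ (t - 2)
            + η * (a * α j + -(a * b)) ^ t))]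
    refine Finset.sum_congr rfl fun i _ => ?_
    rw [hev, ← hσ i, hw]
    have : a * α (σ i) + -(a * b) = α i := by
      rw [hσ i]; linear_combination (α i) * ha
    rw [this]
    field_simp
  -- the LHS sums in terms of w
  have lidx1 : ∀ l : ℕ,
      ∑ i, c i * α i ^ l / g.eval (α i) = ∑ i, w i * α i ^ l :=
    fun l => Finset.sum_congr rfl fun i _ => by rw [hw]; ring
  have lidx2 : ∑ i, c i * ((α i ^ (t - 2) + η * α i ^ t) / g.eval (α i))
      = ∑ i, w i * (α i ^ (t - 2) + η * α i ^ t) :=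
    Finset.sum_congr rfl fun i _ => by rw [hw]; ring
  constructor
  · rintro ⟨hK, h1, h2⟩
    have H := key hp hodd s hs t htdef η a (-(a * b)) ha w α
      (fun l hl hl2 => by rw [← lidx1 l]; exact h1 l hl hl2)
      (by rw [← lidx2]; exact h2)
    refine ⟨fun i => hK (σ i), fun l hl hl2 => ?_, ?_⟩
    · rw [reidx1 l]; exact H.1 l hl hl2
    · rw [reidx2]; exact H.2
  · rintro ⟨hK, h1, h2⟩
    have hfix : ∀ j, a * (a * α j + -(a * b)) + b = α j := by
      intro j; linear_combination (α j - b) * ha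
    have H := key hp hodd s hs t htdef η a b ha w
      (fun j => a * α j + -(a * b))
      (fun l hl hl2 => by rw [← reidx1 l]; exact h1 l hl hl2)
      (by rw [← reidx2]; exact h2)
    simp only [hfix] at H
    refine ⟨fun j => by simpa using hK (σ⁻¹ j), fun l hl hl2 => ?_, ?_⟩
    · rw [lidx1 l]; exact H.1 l hl hl2
    · rw [lidx2]; exact H.2
end

section
/- Let F be a field of odd characteristic, let b ∈ F, and let g(x) ∈ F[x]. Then g(b − x) = g(x) (as polynomials, i.e., g composed with x ↦ b − x equals g) if and only if there exists a polynomial f(x) ∈ F[x] such that g(x) = f((x − b/2)²). -/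
open Polynomial

lemma coeff_comp_neg_X {R : Type*} [CommRing R] (h : R[X]) (n : ℕ) :
    (h.comp (-X)).coeff n = (-1 : R)^n * h.coeff n := by
  induction h using Polynomial.induction_on' with
  | add p q hp hq => simp [add_comp, hp, hq, mul_add]
  | monomial e a =>
    rw [monomial_comp, neg_pow, show ((-1 : R[X])) = C (-1) by simp, ← C_pow,
      coeff_C_mul, coeff_C_mul, coeff_X_pow, coeff_monomial]
    rcases eq_or_ne e n with rfl | he
    · simp [mul_comm]
    · simp [he, Ne.symm he]

lemma even_poly {R : Type*} [CommRing R] [NoZeroDivisors R] (h2 : (2 : R) ≠ 0) (h : R[X])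
    (hh : h.comp (-X) = h) : ∃ f : R[X], h = f.comp (X ^ 2) := by
  refine ⟨∑ n ∈ Finset.range (h.natDegree + 1), C (h.coeff (2 * n)) * X ^ n, ?_⟩
  have hodd : ∀ k, Odd k → h.coeff k = 0 := by
    intro k hk
    have h1 := coeff_comp_neg_X h k
    rw [hh, hk.neg_one_pow, neg_one_mul] at h1
    have h3 : (2 : R) * h.coeff k = 0 := by linear_combination h1
    exact (mul_eq_zero.1 h3).resolve_left h2
  ext k
  rw [Polynomial.comp, eval₂_finset_sum]
  simp only [eval₂_mul, eval₂_C, eval₂_X_pow, ← pow_mul, finset_sum_coeff, coeff_C_mul,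
    coeff_X_pow, mul_ite, mul_one, mul_zero]
  rcases Nat.even_or_odd k with ⟨m, hm⟩ | hk
  · subst hm
    rcases lt_or_ge m (h.natDegree + 1) with hm1 | hm1
    · rw [Finset.sum_eq_single m]
      · simp [two_mul]
      · intro b _ hb; rw [if_neg (by omega)]
      · intro hm2; exact absurd (Finset.mem_range.2 hm1) hm2
    · rw [Finset.sum_eq_zero, eq_comm, coeff_eq_zero_of_natDegree_lt (by omega)]
      intro b hb
      rw [if_neg (by simp only [Finset.mem_range] at hb; omega)]
  · rw [hodd k hk, Finset.sum_eq_zero]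
    intro b _
    obtain ⟨j, hj⟩ := hk
    rw [if_neg (by omega)]

/-- over a field of odd prime characteristic, a polynomial `g`
satisfies `g(b - x) = g(x)` iff `g(x) = f((x - b/2)²)` for some polynomial `f`. -/
theorem stmt16 {F : Type*} [Field F] {p : ℕ} (hp : p.Prime) (hodd : Odd p)
    [CharP F p] (b : F) (g : F[X]) :
    g.comp (C b - X) = g ↔ ∃ f : F[X], g = f.comp ((X - C (b / 2)) ^ 2) := by
  have hp2 : p ≠ 2 := by rintro rfl; simp [Nat.odd_iff] at hodd
  have h2 : (2 : F) ≠ 0 := by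
    intro hc
    have h1 : ((2 : ℕ) : F) = 0 := by exact_mod_cast hc
    have := (CharP.cast_eq_zero_iff F p 2).1 h1
    exact hp2 ((Nat.prime_dvd_prime_iff_eq hp Nat.prime_two).1 this)
  have hb : C b = C (b / 2) + C (b / 2) := by
    rw [← C_add]
    congr 1
    field_simp
    ring
  constructor
  · intro hh
    have key : (g.comp (X + C (b / 2))).comp (-X) = g.comp (X + C (b / 2)) := by
      have e1 : (g.comp (C b - X)).comp (X + C (b / 2)) = g.comp (X + C (b / 2)) := by
        rw [hh]
      rw [comp_assoc] at e1
      rw [comp_assoc]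
      convert e1 using 2
      simp only [add_comp, X_comp, C_comp, neg_comp, sub_comp]
      rw [hb]
      ring
    obtain ⟨f, hf⟩ := even_poly h2 _ key
    refine ⟨f, ?_⟩
    have hg : (g.comp (X + C (b / 2))).comp (X - C (b / 2)) = g := by
      rw [comp_assoc]
      simp
    rw [← hg, hf, comp_assoc]
    simp
  · rintro ⟨f, rfl⟩
    rw [comp_assoc]
    congr 1
    rw [pow_comp, sub_comp, X_comp, C_comp]
    rw [hb]
    ring
end
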